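/- arXiv:1412.0397 — 2 statements merged into one kernel-verified Lean document; each statement's English description precedes it below -/
import Mathlib

section
/- Let P be a basic partition for φ ∈ R_Γ. If J is a connected component of P^∞_♯ with lev(J) = l for some l ≥ 2, then there is a unique element s ∈ S such that lev(φ(s)J) = l−1, and for every other s ∈ S one has lev(φ(s)J) = l+1. -/
noncomputable section

/-- The circle `ℝ/ℤ`. -/
abbrev S1 := AddCircle (1 : ℝ)

instance : Group (S1 ≃ₜ S1) where
  mul f g := g.trans f
  one := Homeomorph.refl _
  inv := Homeomorph.symm
  mul_assoc _ _ _ := rfl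
  one_mul f := Homeomorph.ext fun _ => rfl
  mul_one f := Homeomorph.ext fun _ => rfl
  inv_mul_cancel f := Homeomorph.ext fun x => f.symm_apply_apply x

/-- `f` is an orientation preserving homeomorphism of the circle: it admits a strictly
monotone lift to `ℝ` commuting with the translation by one. -/
def IsOP (f : S1 ≃ₜ S1) : Prop :=
  ∃ F : ℝ → ℝ, StrictMono F ∧ (∀ x, F (x + 1) = F x + 1) ∧
    ∀ x : ℝ, ((F x : S1)) = f (x : S1)

/-- `R_G`: homomorphisms from `G` to `Homeo₊(S¹)`. -/
structure RGp (G : Type) [Group G] where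
  toFun : G →* (S1 ≃ₜ S1)
  op : ∀ g, IsOP (toFun g)

/-- A degree one monotone (not necessarily continuous) self map of the circle. -/
def DegOneMonotone (h : S1 → S1) : Prop :=
  ∃ H : ℝ → ℝ, Monotone H ∧ (∀ x, H (x + 1) = H x + 1) ∧
    ∀ x : ℝ, ((H x : S1)) = h (x : S1)

/-- Membership in `R_G*`: the action has a global fixed point. -/
def HasGlobalFix {G : Type} [Group G] (φ : RGp G) : Prop := ∃ x : S1, ∀ g, φ.toFun g x = x

/-- Semiconjugacy of two circle actions. -/
def Semiconj {G : Type} [Group G] (φ₁ φ₂ : RGp G) : Prop :=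
  (HasGlobalFix φ₁ ∧ HasGlobalFix φ₂) ∨
  (¬ HasGlobalFix φ₁ ∧ ¬ HasGlobalFix φ₂ ∧
    ∃ h : S1 → S1, DegOneMonotone h ∧ ∀ g x, φ₂.toFun g (h x) = h (φ₁.toFun g x))

/-- A (proper) closed interval of the circle. -/
def IsClosedArc (I : Set S1) : Prop :=
  ∃ a b : ℝ, a ≤ b ∧ b < a + 1 ∧ I = (fun x : ℝ => (x : S1)) '' Set.Icc a b

/-- Proximality: every closed interval can be contracted to arbitrarily small
diameter by elements of the action. -/
def ProximalAct {G : Type} [Group G] (φ : RGp G) : Prop :=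
  ∀ I : Set S1, IsClosedArc I → (⨅ g : G, Metric.diam (φ.toFun g '' I)) = 0

/-- The connected components of `X ⊆ S¹`. -/
def compsOf (X : Set S1) : Set (Set S1) := {C | ∃ x ∈ X, C = connectedComponentIn X x}

/-- The components of `X_♯`: closures of the connected components of the complement. -/
def compsSharp (X : Set S1) : Set (Set S1) := {J | ∃ C ∈ compsOf Xᶜ, J = closure C}

/-- `X_♯`: the union of the closures of the connected components of `S¹ ∖ X`. -/
def sharpSet (X : Set S1) : Set S1 := ⋃₀ compsSharp X

/-- `X_* = X ∩ X_♯`. -/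
def starSet (X : Set S1) : Set S1 := X ∩ sharpSet X

/-- `P` is a finite disjoint union of closed intervals. -/
def FinDisjClosedArcs (P : Set S1) : Prop :=
  ∃ 𝒞 : Finset (Set S1), (∀ I ∈ 𝒞, IsClosedArc I) ∧
    (𝒞 : Set (Set S1)).Pairwise Disjoint ∧ P = ⋃₀ (𝒞 : Set (Set S1))

/-- Condition (2) of basic partitions: `φ(s)` maps `I` onto the union of `l ≥ 2`
distinct components of `P` and `l-1` distinct components of `P_♯`. -/
def ExpandsAt {Γ : Type} [Group Γ] (φ : RGp Γ) (P I : Set S1) (s : Γ) : Prop :=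
  ∃ l : ℕ, 2 ≤ l ∧ ∃ Is : Fin l → Set S1, ∃ Js : Fin (l - 1) → Set S1,
    Function.Injective Is ∧ Function.Injective Js ∧
    (∀ i, Is i ∈ compsOf P) ∧ (∀ j, Js j ∈ compsSharp P) ∧
    φ.toFun s '' I = (⋃ i, Is i) ∪ ⋃ j, Js j

/-- `P` is a basic partition for `φ` (with respect to the generating set `S`). -/
def IsBP {Γ : Type} [Group Γ] (φ : RGp Γ) (S : Set Γ) (P : Set S1) : Prop :=
  FinDisjClosedArcs P ∧
  (∀ I ∈ compsOf P, ∃! s, s ∈ S ∧ ExpandsAt φ P I s) ∧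
  (∀ I ∈ compsOf P, ∀ s ∈ S, ¬ ExpandsAt φ P I s →
    ∃ I' ∈ compsOf P, φ.toFun s '' I ⊂ I') ∧
  (∀ J ∈ compsSharp P, ∀ s ∈ S,
    φ.toFun s '' J ∈ compsSharp P ∨ φ.toFun s '' J ⊆ interior P)

/-- The iterated partitions: `iterBP φ S P (l-1)` is `P^l`, so
`P¹ = P` and `P^{l+1} = ⋂_{s ∈ S ∪ {e}} φ(s) P^l`. -/
def iterBP {Γ : Type} [Group Γ] (φ : RGp Γ) (S : Set Γ) (P : Set S1) : ℕ → Set S1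
  | 0 => P
  | n + 1 => ⋂ s ∈ insert (1 : Γ) S, φ.toFun s '' iterBP φ S P n

/-- `P^∞ = ⋂_l P^l`. -/
def PinfBP {Γ : Type} [Group Γ] (φ : RGp Γ) (S : Set Γ) (P : Set S1) : Set S1 :=
  ⋂ n, iterBP φ S P n

/-- `lev(J) = l`: `J ⊆ P^l_♯` but `J ⊄ P^m_♯` for `1 ≤ m < l`. -/
def HasLevel {Γ : Type} [Group Γ] (φ : RGp Γ) (S : Set Γ) (P : Set S1)
    (J : Set S1) (l : ℕ) : Prop :=
  1 ≤ l ∧ J ⊆ sharpSet (iterBP φ S P (l - 1)) ∧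
    ∀ m, 1 ≤ m → m < l → ¬ J ⊆ sharpSet (iterBP φ S P (m - 1))


/-! ### Auxiliary development -/

open Set Filter Topology

instance S1.instLocallyConnectedSpace : LocallyConnectedSpace S1 := by
  apply locallyConnectedSpace_of_connected_bases
    (fun x ε => (fun t : ℝ => (t : S1)) '' Ioo (x.out - ε) (x.out + ε))
    (fun _ ε => 0 < ε)
  · intro x
    have h1 : (𝓝 (x.out : ℝ)).map (fun t : ℝ => (t : S1)) = 𝓝 ((x.out : S1)) :=
      QuotientAddGroup.isOpenQuotientMap_mk.map_nhds_eq _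
    have h2 : ((x.out : ℝ) : S1) = x := QuotientAddGroup.out_eq' x
    rw [h2] at h1
    rw [← h1]
    exact (nhds_basis_Ioo_pos _).map _
  · intro x ε _
    exact (isPreconnected_Ioo).image _ (Continuous.continuousOn (continuous_quotient_mk'))

namespace BPx

theorem comp_nonempty {U C : Set S1} (hC : C ∈ compsOf U) : C.Nonempty := by
  obtain ⟨x, hx, rfl⟩ := hC; exact ⟨x, mem_connectedComponentIn hx⟩

theorem comp_subset {U C : Set S1} (hC : C ∈ compsOf U) : C ⊆ U := by
  obtain ⟨x, hx, rfl⟩ := hC; exact connectedComponentIn_subset _ _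

theorem comp_preconnected {U C : Set S1} (hC : C ∈ compsOf U) : IsPreconnected C := by
  obtain ⟨x, hx, rfl⟩ := hC; exact isPreconnected_connectedComponentIn

theorem comp_isOpen {U C : Set S1} (hU : IsOpen U) (hC : C ∈ compsOf U) : IsOpen C := by
  obtain ⟨x, hx, rfl⟩ := hC; exact hU.connectedComponentIn

theorem comp_eq_of_mem {U C C' : Set S1} (hC : C ∈ compsOf U) (hC' : C' ∈ compsOf U)
    {x : S1} (hx : x ∈ C) (hx' : x ∈ C') : C = C' := by
  obtain ⟨y, hy, rfl⟩ := hC; obtain ⟨z, hz, rfl⟩ := hC'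
  rw [connectedComponentIn_eq hx, connectedComponentIn_eq hx']

theorem subset_comp_of_mem {U C D : Set S1} (hC : C ∈ compsOf U) (hD : IsPreconnected D)
    (hDU : D ⊆ U) {x : S1} (hx : x ∈ D) (hxC : x ∈ C) : D ⊆ C := by
  obtain ⟨y, hy, rfl⟩ := hC
  rw [connectedComponentIn_eq hxC]
  exact hD.subset_connectedComponentIn hx hDU

theorem mem_comps_of_residual {U A : Set S1} (hA : IsOpen A) (hAne : A.Nonempty)
    (hAconn : IsPreconnected A) (hAU : A ⊆ U) (hres : (closure A \ A) ∩ U = ∅) :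
    A ∈ compsOf U := by
  obtain ⟨x, hx⟩ := hAne
  have hxU : x ∈ U := hAU hx
  have hsub : A ⊆ connectedComponentIn U x := hAconn.subset_connectedComponentIn hx hAU
  have hsub2 : connectedComponentIn U x ⊆ A := by
    have h1 : connectedComponentIn U x ⊆ A ∪ (closure A)ᶜ := by
      intro y hy
      by_cases hyA : y ∈ closure A
      · left
        by_contra hyA'
        have : y ∈ (closure A \ A) ∩ U := ⟨⟨hyA, hyA'⟩, connectedComponentIn_subset _ _ hy⟩
        rw [hres] at this; exact this
      · right; exact hyA
    refine IsPreconnected.subset_left_of_subset_union hA (isClosed_closure.isOpen_compl) ?_ h1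
      ⟨x, mem_connectedComponentIn hxU, hx⟩ isPreconnected_connectedComponentIn
    exact Set.disjoint_left.mpr (fun y hy hy2 => hy2 (subset_closure hy))
  exact ⟨x, hxU, Subset.antisymm hsub hsub2⟩

theorem residual_not_mem {U C : Set S1} (hU : IsOpen U) (hC : C ∈ compsOf U) :
    (closure C \ C) ∩ U = ∅ := by
  ext y; simp only [mem_inter_iff, mem_diff, mem_empty_iff_false, iff_false, not_and, and_imp]
  intro hyc hync hyU
  have hopen : IsOpen (connectedComponentIn U y) := hU.connectedComponentIn
  have hmem : y ∈ connectedComponentIn U y := mem_connectedComponentIn hyU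
  obtain ⟨z, hz1, hz2⟩ : (connectedComponentIn U y ∩ C).Nonempty := by
    rcases mem_closure_iff.1 hyc _ hopen hmem with ⟨z, hz⟩
    exact ⟨z, hz⟩
  have : C = connectedComponentIn U y := comp_eq_of_mem hC ⟨y, hyU, rfl⟩ hz2 hz1
  exact hync (this ▸ hmem)

theorem residual_subset {U C : Set S1} (hU : IsOpen U) (hC : C ∈ compsOf U) :
    closure C \ C ⊆ Uᶜ := by
  intro y hy
  intro hyU
  have := residual_not_mem hU hC
  have : y ∈ (closure C \ C) ∩ U := ⟨hy, hyU⟩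
  rwa [residual_not_mem hU hC] at this

theorem comp_image (f : S1 ≃ₜ S1) {U C : Set S1} (hC : C ∈ compsOf U) :
    (f '' C) ∈ compsOf (f '' U) := by
  obtain ⟨x, hx, rfl⟩ := hC
  refine ⟨f x, mem_image_of_mem _ hx, ?_⟩
  apply Subset.antisymm
  · apply IsPreconnected.subset_connectedComponentIn
    · exact isPreconnected_connectedComponentIn.image _ (f.continuous.continuousOn)
    · exact mem_image_of_mem _ (mem_connectedComponentIn hx)
    · exact image_mono (connectedComponentIn_subset _ _)
  · intro y hy
    have h1 : f.symm '' connectedComponentIn (f '' U) (f x) ⊆ connectedComponentIn U x := by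
      apply IsPreconnected.subset_connectedComponentIn
      · exact isPreconnected_connectedComponentIn.image _ (f.symm.continuous.continuousOn)
      · exact ⟨f x, mem_connectedComponentIn (mem_image_of_mem _ hx), f.symm_apply_apply x⟩
      · intro z ⟨w, hw, hwz⟩
        obtain ⟨u, hu, hu2⟩ := connectedComponentIn_subset (f '' U) (f x) hw
        rw [← hwz, ← hu2, f.symm_apply_apply]; exact hu
    have : f.symm y ∈ connectedComponentIn U x := h1 ⟨y, hy, rfl⟩
    exact ⟨f.symm y, this, f.apply_symm_apply y⟩

theorem comp_mono_down {U V C : Set S1} (hC : C ∈ compsOf V) (hUV : U ⊆ V) (hCU : C ⊆ U) :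
    C ∈ compsOf U := by
  obtain ⟨x, hx⟩ := comp_nonempty hC
  have hCD : C ⊆ connectedComponentIn U x :=
    (comp_preconnected hC).subset_connectedComponentIn hx hCU
  have hDC : connectedComponentIn U x ⊆ C :=
    subset_comp_of_mem hC isPreconnected_connectedComponentIn
      ((connectedComponentIn_subset _ _).trans hUV) (mem_connectedComponentIn (hCU hx)) hx
  exact ⟨x, hCU hx, Subset.antisymm hCD hDC⟩

end BPx

namespace BPx

variable {Γ : Type} [Group Γ] (φ : RGp Γ)

theorem coe_mul (g h : Γ) : ⇑(φ.toFun (g * h)) = ⇑(φ.toFun g) ∘ ⇑(φ.toFun h) := by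
  rw [map_mul]; rfl

theorem coe_one : ⇑(φ.toFun (1 : Γ)) = id := by
  rw [map_one]; rfl

theorem img_one (A : Set S1) : φ.toFun (1 : Γ) '' A = A := by
  rw [coe_one, Set.image_id]

theorem img_img (g h : Γ) (A : Set S1) :
    φ.toFun g '' (φ.toFun h '' A) = φ.toFun (g * h) '' A := by
  rw [coe_mul, Set.image_comp]

theorem img_inv_img (g : Γ) (A : Set S1) : φ.toFun g⁻¹ '' (φ.toFun g '' A) = A := by
  rw [img_img, inv_mul_cancel, img_one]

theorem apply_inv_apply (g : Γ) (x : S1) : φ.toFun g⁻¹ (φ.toFun g x) = x := by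
  have : (⇑(φ.toFun g⁻¹) ∘ ⇑(φ.toFun g)) x = id x := by
    rw [← coe_mul, inv_mul_cancel, coe_one]
  simpa using this

theorem img_compl (g : Γ) (A : Set S1) : φ.toFun g '' Aᶜ = (φ.toFun g '' A)ᶜ :=
  Set.image_compl_eq (φ.toFun g).bijective

theorem img_closure (g : Γ) (A : Set S1) :
    φ.toFun g '' closure A = closure (φ.toFun g '' A) :=
  (φ.toFun g).image_closure A

theorem img_interior (g : Γ) (A : Set S1) :
    φ.toFun g '' interior A = interior (φ.toFun g '' A) :=
  (φ.toFun g).image_interior A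

theorem img_diff (g : Γ) (A B : Set S1) :
    φ.toFun g '' (A \ B) = φ.toFun g '' A \ φ.toFun g '' B :=
  Set.image_diff (φ.toFun g).injective A B

theorem img_residual (g : Γ) (A : Set S1) :
    φ.toFun g '' (closure A \ A) = closure (φ.toFun g '' A) \ φ.toFun g '' A := by
  rw [img_diff, img_closure]

variable (S : Set Γ) (P : Set S1)

theorem iter_succ_subset {n : ℕ} {s : Γ} (hs : s ∈ insert (1 : Γ) S) :
    iterBP φ S P (n + 1) ⊆ φ.toFun s '' iterBP φ S P n := by
  intro x hx
  simp only [iterBP, Set.mem_iInter] at hx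
  exact hx s hs

theorem iter_antitone (n : ℕ) : iterBP φ S P (n + 1) ⊆ iterBP φ S P n := by
  have := iter_succ_subset φ S P (n := n) (s := (1 : Γ)) (mem_insert _ _)
  rwa [img_one] at this

theorem iter_le {m n : ℕ} (h : m ≤ n) : iterBP φ S P n ⊆ iterBP φ S P m := by
  induction n with
  | zero => simp_all
  | succ k ih =>
    rcases Nat.lt_or_ge m (k+1) with h1 | h1
    · exact (iter_antitone φ S P k).trans (ih (Nat.lt_succ_iff.mp h1))
    · have : m = k + 1 := le_antisymm h h1
      subst this; rfl

theorem Pinf_subset (n : ℕ) : PinfBP φ S P ⊆ iterBP φ S P n :=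
  Set.iInter_subset _ _

theorem iter_compl_succ (n : ℕ) :
    (iterBP φ S P (n + 1))ᶜ = ⋃ s ∈ insert (1 : Γ) S, φ.toFun s '' (iterBP φ S P n)ᶜ := by
  have : (iterBP φ S P (n + 1)) = ⋂ s ∈ insert (1 : Γ) S, φ.toFun s '' iterBP φ S P n := rfl
  rw [this, Set.compl_iInter₂]
  apply Set.iUnion₂_congr
  intro s hs
  rw [img_compl]

theorem Pinf_invariant {s : Γ} (hsym : ∀ s ∈ S, s⁻¹ ∈ S) (hs : s ∈ S) :
    φ.toFun s '' PinfBP φ S P = PinfBP φ S P := by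
  have key : ∀ t ∈ S, PinfBP φ S P ⊆ φ.toFun t '' PinfBP φ S P := by
    intro t ht x hx
    have h1 : ∀ n, x ∈ φ.toFun t '' iterBP φ S P n := by
      intro n
      exact iter_succ_subset φ S P (mem_insert_of_mem _ ht) (Set.mem_iInter.mp hx (n+1))
    have h2 : ∀ n, φ.toFun t⁻¹ x ∈ iterBP φ S P n := by
      intro n
      obtain ⟨y, hy, hyx⟩ := h1 n
      rwa [← hyx, apply_inv_apply]
    refine ⟨φ.toFun t⁻¹ x, Set.mem_iInter.mpr h2, ?_⟩
    rw [← Function.comp_apply (f := ⇑(φ.toFun t)), ← coe_mul, mul_inv_cancel, coe_one, id_eq]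
  apply Subset.antisymm
  · have h := key s⁻¹ (hsym s hs)
    intro y ⟨x, hx, hxy⟩
    obtain ⟨z, hz, hzx⟩ := h hx
    rw [← hxy, ← hzx, ← Function.comp_apply (f := ⇑(φ.toFun s)), ← coe_mul, mul_inv_cancel,
      coe_one, id_eq]
    exact hz
  · exact key s hs

theorem Pinf_compl_invariant (hsym : ∀ s ∈ S, s⁻¹ ∈ S) {s : Γ} (hs : s ∈ S) :
    φ.toFun s '' (PinfBP φ S P)ᶜ = (PinfBP φ S P)ᶜ := by
  rw [img_compl, Pinf_invariant φ S P hsym hs]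

end BPx

namespace BPx

theorem coe_eq_iff (t u : ℝ) : (t : S1) = (u : S1) ↔ ∃ k : ℤ, t - u = k := by
  rw [QuotientAddGroup.eq_iff_sub_mem]
  constructor
  · intro h
    obtain ⟨k, hk⟩ := AddSubgroup.mem_zmultiples_iff.mp h
    exact ⟨k, by rw [← hk, zsmul_eq_mul, mul_one]⟩
  · intro ⟨k, hk⟩
    exact AddSubgroup.mem_zmultiples_iff.mpr ⟨k, by rw [zsmul_eq_mul, mul_one, hk]⟩

theorem coe_cont : Continuous (fun t : ℝ => (t : S1)) := continuous_quotient_mk'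

theorem coe_open : IsOpenMap (fun t : ℝ => (t : S1)) := QuotientAddGroup.isOpenMap_coe

theorem arc_closed {X : Set S1} (hX : IsClosedArc X) : IsClosed X := by
  obtain ⟨a, b, hab, hb, rfl⟩ := hX
  exact (isCompact_Icc.image coe_cont).isClosed

theorem arc_preconnected {X : Set S1} (hX : IsClosedArc X) : IsPreconnected X := by
  obtain ⟨a, b, hab, hb, rfl⟩ := hX
  exact isPreconnected_Icc.image _ (Continuous.continuousOn continuous_quotient_mk')

theorem P_closed {P : Set S1} (h : FinDisjClosedArcs P) : IsClosed P := by
  obtain ⟨𝒞, harc, hdis, rfl⟩ := h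
  rw [Set.sUnion_eq_biUnion]
  exact Set.Finite.isClosed_biUnion (𝒞.finite_toSet) (fun X hX => arc_closed (harc X hX))

variable {Γ : Type} [Group Γ] {φ : RGp Γ} {S : Set Γ} {P : Set S1}

/-- Every connected component of a basic partition is one of its arcs. -/
theorem comp_arc (h : FinDisjClosedArcs P) {C : Set S1} (hC : C ∈ compsOf P) :
    ∃ a b : ℝ, a ≤ b ∧ b < a + 1 ∧ C = (fun t : ℝ => (t : S1)) '' Icc a b := by
  classical
  obtain ⟨𝒞, harc, hdis, hPeq⟩ := h
  obtain ⟨x₀, hx₀⟩ := comp_nonempty hC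
  have hx₀P : x₀ ∈ P := comp_subset hC hx₀
  obtain ⟨X, hX𝒞, hx₀X⟩ : ∃ X ∈ (𝒞 : Set (Set S1)), x₀ ∈ X := by
    rw [hPeq] at hx₀P; exact hx₀P
  have hXC : X ⊆ C := subset_comp_of_mem hC (arc_preconnected (harc X hX𝒞))
    (by rw [hPeq]; exact fun y hy => ⟨X, hX𝒞, hy⟩) hx₀X hx₀
  have hCX : C ⊆ X := by
    set Y : Set S1 := ⋃₀ ((𝒞.erase X : Finset (Set S1)) : Set (Set S1)) with hY
    have hYc : IsClosed Y := by
      rw [hY, Set.sUnion_eq_biUnion]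
      exact Set.Finite.isClosed_biUnion ((𝒞.erase X).finite_toSet)
        (fun Z hZ => arc_closed (harc Z (Finset.mem_of_mem_erase hZ)))
    have hXc : IsClosed X := arc_closed (harc X hX𝒞)
    have hdisXY : Disjoint X Y := by
      rw [hY, Set.disjoint_sUnion_right]
      intro Z hZ
      exact hdis hX𝒞 (Finset.mem_of_mem_erase hZ) (Finset.ne_of_mem_erase hZ).symm
    have hPXY : P ⊆ X ∪ Y := by
      rw [hPeq]
      intro y ⟨Z, hZ, hyZ⟩
      by_cases hZX : Z = X
      · left; rwa [← hZX]
      · right; exact ⟨Z, Finset.mem_erase.mpr ⟨hZX, hZ⟩, hyZ⟩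
    obtain ⟨U, V, hU, hV, hXU, hYV, hUV⟩ := NormalSpace.normal X Y hXc hYc hdisXY
    have hCU : C ⊆ U := by
      refine IsPreconnected.subset_left_of_subset_union hU hV hUV
        ((comp_subset hC).trans (hPXY.trans (union_subset_union hXU hYV)))
        ⟨x₀, hx₀, hXU hx₀X⟩ (comp_preconnected hC)
    intro c hc
    rcases hPXY (comp_subset hC hc) with h1 | h1
    · exact h1
    · exact absurd (hYV h1) (fun hcV => (Set.disjoint_left.mp hUV (hCU hc)) hcV)
  have : C = X := Subset.antisymm hCX hXC
  rw [this]
  exact harc X hX𝒞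

theorem comp_arc_pos (hP : IsBP φ S P) {C : Set S1} (hC : C ∈ compsOf P) :
    ∃ a b : ℝ, a < b ∧ b < a + 1 ∧ C = (fun t : ℝ => (t : S1)) '' Icc a b := by
  obtain ⟨a, b, hab, hb, heq⟩ := comp_arc hP.1 hC
  rcases lt_or_eq_of_le hab with h | h
  · exact ⟨a, b, h, hb, heq⟩
  · exfalso
    subst h
    rw [Icc_self, Set.image_singleton] at heq
    obtain ⟨s, ⟨hsS, l, hl2, Is, Js, hinj, _, hIscomp, _, himg⟩, _⟩ := hP.2.1 C hC
    have hsub : ∀ i, Is i ⊆ {φ.toFun s ((a : ℝ) : S1)} := by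
      intro i y hy
      have : y ∈ φ.toFun s '' C := by
        rw [himg]; exact Or.inl (Set.mem_iUnion.mpr ⟨i, hy⟩)
      rwa [heq, Set.image_singleton] at this
    have h0 : (⟨0, by omega⟩ : Fin l) ≠ ⟨1, by omega⟩ := by
      intro h; simpa using congrArg Fin.val h
    apply h0
    apply hinj
    have e0 := (comp_nonempty (hIscomp ⟨0, by omega⟩)).subset_singleton_iff.mp (hsub _)
    have e1 := (comp_nonempty (hIscomp ⟨1, by omega⟩)).subset_singleton_iff.mp (hsub _)
    rw [e0, e1]

theorem arcIoo_interior (h : FinDisjClosedArcs P) {C : Set S1} (hC : C ∈ compsOf P)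
    {a b : ℝ} (heq : C = (fun t : ℝ => (t : S1)) '' Icc a b) :
    (fun t : ℝ => (t : S1)) '' Ioo a b ⊆ interior P := by
  apply interior_maximal
  · intro y ⟨t, ht, hty⟩
    have : y ∈ C := by rw [heq]; exact ⟨t, Ioo_subset_Icc_self ht, hty⟩
    exact comp_subset hC this
  · exact coe_open _ isOpen_Ioo

end BPx

namespace BPx

variable {Γ : Type} [Group Γ] {φ : RGp Γ} {S : Set Γ} {P : Set S1}

theorem mem_arc_shift {a b u : ℝ} (hb : b < a + 1)
    (h : (u : S1) ∈ (fun t : ℝ => (t : S1)) '' Icc a b) :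
    ∃ t ∈ Icc a b, ∃ k : ℤ, t - u = k := by
  obtain ⟨t, ht, hteq⟩ := h
  exact ⟨t, ht, (coe_eq_iff t u).mp hteq⟩

/-- There is a small open arc to the left of the left endpoint of a component of `P`
that misses `P`. -/
theorem exists_left_gap (h : FinDisjClosedArcs P) {C : Set S1} (hC : C ∈ compsOf P)
    {a b : ℝ} (hab : a ≤ b) (hb : b < a + 1)
    (heq : C = (fun t : ℝ => (t : S1)) '' Icc a b) :
    ∃ ε > 0, ε < 1 ∧ ∀ u ∈ Ioo (a - ε) a, ((u : S1)) ∉ P := by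
  classical
  obtain ⟨𝒞, harc, hdis, hPeq⟩ := h
  set x : S1 := ((a : ℝ) : S1) with hx
  have hxC : x ∈ C := by rw [heq]; exact ⟨a, ⟨le_refl a, hab⟩, rfl⟩
  -- arcs not containing x
  set 𝒟 : Finset (Set S1) := 𝒞.filter (fun X => x ∉ X) with h𝒟
  have hU₀ : IsOpen (⋂ X ∈ 𝒟, ((fun t : ℝ => (t : S1)) ⁻¹' X)ᶜ) := by
    apply isOpen_biInter_finset
    intro X hX
    exact (IsClosed.preimage coe_cont (arc_closed (harc X (Finset.mem_of_mem_filter X hX)))).isOpen_compl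
  have haU₀ : a ∈ ⋂ X ∈ 𝒟, ((fun t : ℝ => (t : S1)) ⁻¹' X)ᶜ := by
    apply Set.mem_iInter₂.mpr
    intro X hX
    exact (Finset.mem_filter.mp hX).2
  obtain ⟨ε₁, hε₁, hball⟩ := Metric.isOpen_iff.mp hU₀ a haU₀
  refine ⟨min (ε₁/2) (min ((a + 1 - b)/2) (1/2)),
    lt_min (by linarith) (lt_min (by linarith) (by norm_num)), ?_, ?_⟩
  · calc min (ε₁/2) (min ((a + 1 - b)/2) (1/2)) ≤ 1/2 :=
        le_trans (min_le_right _ _) (min_le_right _ _)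
      _ < 1 := by norm_num
  intro u hu huP
  set ε := min (ε₁/2) (min ((a + 1 - b)/2) (1/2)) with hε
  have hub : u ∈ Metric.ball a ε₁ := by
    rw [Metric.mem_ball, Real.dist_eq, abs_sub_lt_iff]
    constructor
    · linarith [hu.2]
    · have h1 : a - ε < u := hu.1
      have h2 : ε ≤ ε₁/2 := min_le_left _ _
      have h3 : (0:ℝ) < ε₁ := hε₁
      linarith
  rw [hPeq] at huP
  obtain ⟨X, hX𝒞, huX⟩ := huP
  by_cases hxX : x ∈ X
  · -- X contains x hence X ⊆ C
    have hXsubC : X ⊆ C := subset_comp_of_mem hC (arc_preconnected (harc X hX𝒞))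
      (by rw [hPeq]; exact fun y hy => ⟨X, hX𝒞, hy⟩) hxX hxC
    have huC : ((u : S1)) ∈ C := hXsubC huX
    rw [heq] at huC
    obtain ⟨t, ht, k, htk⟩ := mem_arc_shift hb huC
    -- u ∈ (a - ε, a), t ∈ [a, b], t - u = k
    have hk1 : (0:ℝ) < k := by
      have : u < a := hu.2
      have := ht.1
      have : (0:ℝ) < t - u := by linarith
      linarith [htk ▸ this]
    have hklt : (k:ℝ) < 2 := by
      have h1 : t ≤ b := ht.2
      have h2 : a - ε < u := hu.1
      have h3 : ε ≤ 1/2 := le_trans (min_le_right _ _) (min_le_right _ _)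
      have : t - u < b - a + ε := by linarith
      have : t - u < 2 := by linarith [hb]
      linarith [htk ▸ this]
    have hk : k = 1 := by
      have h1 : (1:ℤ) ≤ k := by exact_mod_cast hk1
      have h2 : k < 2 := by exact_mod_cast hklt
      omega
    rw [hk] at htk
    -- t = u + 1 > a + 1 - ε ≥ b : contradiction with t ≤ b
    have hεb : ε ≤ (a + 1 - b)/2 := le_trans (min_le_right _ _) (min_le_left _ _)
    have : t = u + 1 := by push_cast at htk; linarith
    have h1 : t > a + 1 - ε := by rw [this]; linarith [hu.1]
    have h2 : t ≤ b := ht.2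
    have hba : a + 1 - b > 0 := by linarith
    linarith
  · -- X does not contain x
    have : u ∈ ((fun t : ℝ => (t : S1)) ⁻¹' X)ᶜ := by
      have := hball hub
      have h2 : X ∈ 𝒟 := Finset.mem_filter.mpr ⟨hX𝒞, hxX⟩
      exact Set.mem_iInter₂.mp this X h2
    exact this huX

/-- There is a small open arc to the right of the right endpoint of a component of `P`
that misses `P`. -/
theorem exists_right_gap (h : FinDisjClosedArcs P) {C : Set S1} (hC : C ∈ compsOf P)
    {a b : ℝ} (hab : a ≤ b) (hb : b < a + 1)
    (heq : C = (fun t : ℝ => (t : S1)) '' Icc a b) :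
    ∃ ε > 0, ε < 1 ∧ ∀ u ∈ Ioo b (b + ε), ((u : S1)) ∉ P := by
  classical
  obtain ⟨𝒞, harc, hdis, hPeq⟩ := h
  set x : S1 := ((b : ℝ) : S1) with hx
  have hxC : x ∈ C := by rw [heq]; exact ⟨b, ⟨hab, le_refl b⟩, rfl⟩
  set 𝒟 : Finset (Set S1) := 𝒞.filter (fun X => x ∉ X) with h𝒟
  have hU₀ : IsOpen (⋂ X ∈ 𝒟, ((fun t : ℝ => (t : S1)) ⁻¹' X)ᶜ) := by
    apply isOpen_biInter_finset
    intro X hX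
    exact (IsClosed.preimage coe_cont (arc_closed (harc X (Finset.mem_of_mem_filter X hX)))).isOpen_compl
  have haU₀ : b ∈ ⋂ X ∈ 𝒟, ((fun t : ℝ => (t : S1)) ⁻¹' X)ᶜ := by
    apply Set.mem_iInter₂.mpr
    intro X hX
    exact (Finset.mem_filter.mp hX).2
  obtain ⟨ε₁, hε₁, hball⟩ := Metric.isOpen_iff.mp hU₀ b haU₀
  refine ⟨min (ε₁/2) (min ((a + 1 - b)/2) (1/2)),
    lt_min (by linarith) (lt_min (by linarith) (by norm_num)), ?_, ?_⟩
  · calc min (ε₁/2) (min ((a + 1 - b)/2) (1/2)) ≤ 1/2 :=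
        le_trans (min_le_right _ _) (min_le_right _ _)
      _ < 1 := by norm_num
  intro u hu huP
  set ε := min (ε₁/2) (min ((a + 1 - b)/2) (1/2)) with hε
  have hub : u ∈ Metric.ball b ε₁ := by
    rw [Metric.mem_ball, Real.dist_eq, abs_sub_lt_iff]
    have h2 : ε ≤ ε₁/2 := min_le_left _ _
    have h3 : (0:ℝ) < ε₁ := hε₁
    constructor
    · linarith [hu.2]
    · linarith [hu.1]
  rw [hPeq] at huP
  obtain ⟨X, hX𝒞, huX⟩ := huP
  by_cases hxX : x ∈ X
  · have hXsubC : X ⊆ C := subset_comp_of_mem hC (arc_preconnected (harc X hX𝒞))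
      (by rw [hPeq]; exact fun y hy => ⟨X, hX𝒞, hy⟩) hxX hxC
    have huC : ((u : S1)) ∈ C := hXsubC huX
    rw [heq] at huC
    obtain ⟨t, ht, k, htk⟩ := mem_arc_shift hb huC
    -- u ∈ (b, b + ε), t ∈ [a, b], t - u = k
    have hεb : ε ≤ (a + 1 - b)/2 := le_trans (min_le_right _ _) (min_le_left _ _)
    have hk1 : (k:ℝ) < 0 := by
      have : t - u < 0 := by linarith [ht.2, hu.1]
      linarith [htk ▸ this]
    have hklt : (-2:ℝ) < k := by
      have h1 : a ≤ t := ht.1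
      have h2 : u < b + ε := hu.2
      have : t - u > a - b - ε := by linarith
      have : t - u > -2 := by linarith [hb]
      linarith [htk ▸ this]
    have hk : k = -1 := by
      have h1 : k < 0 := by exact_mod_cast hk1
      have h2 : (-2:ℤ) < k := by exact_mod_cast hklt
      omega
    rw [hk] at htk
    have hba : a + 1 - b > 0 := by linarith
    have ht1 : t = u - 1 := by push_cast at htk; linarith
    have h1 : t < b - 1 + ε := by rw [ht1]; linarith [hu.2]
    have h2 : a ≤ t := ht.1
    linarith
  · have : u ∈ ((fun t : ℝ => (t : S1)) ⁻¹' X)ᶜ := by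
      have := hball hub
      have h2 : X ∈ 𝒟 := Finset.mem_filter.mpr ⟨hX𝒞, hxX⟩
      exact Set.mem_iInter₂.mp this X h2
    exact this huX

end BPx

namespace BPx

variable {Γ : Type} [Group Γ] {φ : RGp Γ} {S : Set Γ} {P : Set S1}

/-- A point of `P` outside the interior of `P` is in the closure of a gap of `P`. -/
theorem endpoint_closure_gap (hP : IsBP φ S P) {x : S1} (hx : x ∈ P)
    (hxi : x ∉ interior P) : ∃ C₀ ∈ compsOf Pᶜ, x ∈ closure C₀ := by
  have hC : connectedComponentIn P x ∈ compsOf P := ⟨x, hx, rfl⟩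
  obtain ⟨a, b, hab, hb, heq⟩ := comp_arc hP.1 hC
  have hxC : x ∈ connectedComponentIn P x := mem_connectedComponentIn hx
  have hend : x = ((a : ℝ) : S1) ∨ x = ((b : ℝ) : S1) := by
    rw [heq] at hxC
    obtain ⟨t, ht, htx⟩ := hxC
    rcases lt_or_eq_of_le ht.1 with h1 | h1
    · rcases lt_or_eq_of_le ht.2 with h2 | h2
      · exfalso
        apply hxi
        apply arcIoo_interior hP.1 hC heq
        exact ⟨t, ⟨h1, h2⟩, htx⟩
      · right; rw [← htx, h2]
    · left; rw [← htx, ← h1]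
  -- produce a nonempty open arc in the complement with x in its closure
  have key : ∀ (c d : ℝ), c < d → (∀ u ∈ Ioo c d, ((u : S1)) ∉ P) →
      (x ∈ closure ((fun t : ℝ => (t : S1)) '' Ioo c d)) →
      ∃ C₀ ∈ compsOf Pᶜ, x ∈ closure C₀ := by
    intro c d hcd hmiss hclos
    have hne : ((fun t : ℝ => (t : S1)) '' Ioo c d).Nonempty :=
      (Set.nonempty_Ioo.mpr hcd).image _
    obtain ⟨y, hy⟩ := hne
    have hsub : (fun t : ℝ => (t : S1)) '' Ioo c d ⊆ Pᶜ := by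
      intro z ⟨u, hu, huz⟩; rw [← huz]; exact hmiss u hu
    have hconn : IsPreconnected ((fun t : ℝ => (t : S1)) '' Ioo c d) :=
      isPreconnected_Ioo.image _ coe_cont.continuousOn
    have hC₀ : connectedComponentIn Pᶜ y ∈ compsOf Pᶜ := ⟨y, hsub hy, rfl⟩
    refine ⟨_, hC₀, ?_⟩
    have : (fun t : ℝ => (t : S1)) '' Ioo c d ⊆ connectedComponentIn Pᶜ y :=
      hconn.subset_connectedComponentIn hy hsub
    exact closure_mono this hclos
  rcases hend with hxa | hxb
  · obtain ⟨ε, hε, hε1, hmiss⟩ := exists_left_gap hP.1 hC hab hb heq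
    apply key (a - ε) a (by linarith) hmiss
    rw [hxa]
    have : (a : ℝ) ∈ closure (Ioo (a - ε) a) := by
      rw [closure_Ioo (by linarith : a - ε ≠ a)]
      exact ⟨by linarith, le_refl a⟩
    exact (image_closure_subset_closure_image coe_cont) ⟨a, this, rfl⟩
  · obtain ⟨ε, hε, hε1, hmiss⟩ := exists_right_gap hP.1 hC hab hb heq
    apply key b (b + ε) (by linarith) hmiss
    rw [hxb]
    have : (b : ℝ) ∈ closure (Ioo b (b + ε)) := by
      rw [closure_Ioo (by linarith : b ≠ b + ε)]
      exact ⟨le_refl b, by linarith⟩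
    exact (image_closure_subset_closure_image coe_cont) ⟨b, this, rfl⟩

/-- Key regularity property: the interior of the closure of a gap of `P` is the gap itself. -/
theorem interior_closure_gap (hP : IsBP φ S P) {C : Set S1} (hC : C ∈ compsOf Pᶜ) :
    interior (closure C) = C := by
  have hPc : IsClosed P := P_closed hP.1
  have hCop : IsOpen C := comp_isOpen hPc.isOpen_compl hC
  apply Subset.antisymm
  · intro z hz
    by_cases hzP : z ∈ P
    · exfalso
      -- z is in the interior of the closure of the gap but belongs to P: impossible
      have hI : connectedComponentIn P z ∈ compsOf P := ⟨z, hzP, rfl⟩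
      obtain ⟨a, b, hab, hb, heq⟩ := comp_arc_pos hP hI
      have hzI : z ∈ connectedComponentIn P z := mem_connectedComponentIn hzP
      rw [heq] at hzI
      obtain ⟨t, ht, htz⟩ := hzI
      have hUopen : IsOpen (interior (closure C)) := isOpen_interior
      have htz' : ((t : ℝ) : S1) = z := htz
      have htpre : t ∈ (fun t : ℝ => (t : S1)) ⁻¹' interior (closure C) := by
        simp only [Set.mem_preimage]; rw [htz']; exact hz
      obtain ⟨δ, hδ, hball⟩ := Metric.isOpen_iff.mp (hUopen.preimage coe_cont) t htpre
      set c := max a (t - δ/2) with hc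
      set d := min b (t + δ/2) with hd
      have hcd : c < d := by
        simp only [hc, hd, max_lt_iff, lt_min_iff]
        refine ⟨⟨?_, ?_⟩, ?_, ?_⟩ <;> linarith [ht.1, ht.2, hδ]
      have hOP : (fun t : ℝ => (t : S1)) '' Ioo c d ⊆ P := by
        intro y ⟨u, hu, huy⟩
        have : ((u:ℝ) : S1) ∈ connectedComponentIn P z := by
          rw [heq]
          exact ⟨u, ⟨le_trans (le_max_left _ _) hu.1.le, le_trans hu.2.le (min_le_left _ _)⟩, rfl⟩
        rw [← huy]
        exact connectedComponentIn_subset _ _ this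
      have hOU : (fun t : ℝ => (t : S1)) '' Ioo c d ⊆ closure C := by
        intro y ⟨u, hu, huy⟩
        have hu2 : u ∈ Metric.ball t δ := by
          rw [Metric.mem_ball, Real.dist_eq, abs_sub_lt_iff]
          constructor
          · have := hu.2; have : u < t + δ/2 := lt_of_lt_of_le this (min_le_right _ _)
            linarith
          · have := hu.1; have : t - δ/2 < u := lt_of_le_of_lt (le_max_right _ _) this
            linarith
        have := hball hu2
        rw [← huy]
        exact interior_subset this
      obtain ⟨y, hy⟩ : ((fun t : ℝ => (t : S1)) '' Ioo c d).Nonempty :=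
        (Set.nonempty_Ioo.mpr hcd).image _
      have hyP : y ∈ P := hOP hy
      have hyO : IsOpen ((fun t : ℝ => (t : S1)) '' Ioo c d) := coe_open _ isOpen_Ioo
      obtain ⟨w, hw1, hw2⟩ := mem_closure_iff.mp (hOU hy) _ hyO hy
      exact (comp_subset hC hw2) (hOP hw1)
    · -- z outside P: it lies in the gap
      have hzc : z ∈ closure C := interior_subset hz
      have hCz : connectedComponentIn Pᶜ z ∈ compsOf Pᶜ := ⟨z, hzP, rfl⟩
      have hzo : IsOpen (connectedComponentIn Pᶜ z) := comp_isOpen hPc.isOpen_compl hCz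
      obtain ⟨w, hw1, hw2⟩ := mem_closure_iff.mp hzc _ hzo (mem_connectedComponentIn hzP)
      have := comp_eq_of_mem hC hCz hw2 hw1
      rw [this]
      exact mem_connectedComponentIn hzP
  · exact interior_maximal subset_closure hCop

end BPx

namespace BPx

variable {Γ : Type} [Group Γ] {φ : RGp Γ} {S : Set Γ} {P : Set S1}

theorem mem_img_iff (φ : RGp Γ) (g : Γ) (A : Set S1) (y : S1) :
    y ∈ φ.toFun g '' A ↔ φ.toFun g⁻¹ y ∈ A := by
  constructor
  · rintro ⟨w, hw, rfl⟩
    rwa [apply_inv_apply]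
  · intro h
    refine ⟨φ.toFun g⁻¹ y, h, ?_⟩
    have := apply_inv_apply φ g⁻¹ y
    rwa [inv_inv] at this

theorem gap_not_subset_P {C : Set S1} (hC : C ∈ compsOf Pᶜ) : ¬ closure C ⊆ P := by
  intro h
  obtain ⟨y, hy⟩ := comp_nonempty hC
  exact (comp_subset hC hy) (h (subset_closure hy))

theorem gap_residual_subset_P (hcl : IsClosed P) {C : Set S1} (hC : C ∈ compsOf Pᶜ) :
    closure C \ C ⊆ P := by
  intro y hy
  have := residual_subset hcl.isOpen_compl hC hy
  rwa [compl_compl] at this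

theorem expands_eq (hP : IsBP φ S P) {I : Set S1} (hI : I ∈ compsOf P) {v e : Γ}
    (hv : v ∈ S) (hexpv : ExpandsAt φ P I v) (he : e ∈ S) (hexpe : ExpandsAt φ P I e) :
    v = e := by
  obtain ⟨s, _, huniq⟩ := hP.2.1 I hI
  rw [huniq v ⟨hv, hexpv⟩, huniq e ⟨he, hexpe⟩]

theorem expands_of_image_not_subset (hP : IsBP φ S P) {I : Set S1} (hI : I ∈ compsOf P)
    {v : Γ} (hv : v ∈ S) (h : ¬ (φ.toFun v '' I ⊆ P)) : ExpandsAt φ P I v := by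
  by_contra hne
  obtain ⟨I', hI', hss⟩ := hP.2.2.1 I hI v hv hne
  exact h (hss.subset.trans (comp_subset hI'))

/-- If `φ(v) I ⊆ I'` with `I ≠ φ(v⁻¹) I'` forced by strictness, then `v⁻¹` expands `I'`. -/
theorem expands_inv_of_contract (hP : IsBP φ S P) (hsym : ∀ s ∈ S, s⁻¹ ∈ S)
    {I I' : Set S1} (hI : I ∈ compsOf P) (hI' : I' ∈ compsOf P) {v : Γ} (hv : v ∈ S)
    (hss : φ.toFun v '' I ⊂ I') : ExpandsAt φ P I' v⁻¹ := by
  by_contra hne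
  obtain ⟨I'', hI'', hss2⟩ := hP.2.2.1 I' hI' v⁻¹ (hsym v hv) hne
  have hII : I ⊆ φ.toFun v⁻¹ '' I' := by
    intro y hy
    rw [mem_img_iff, inv_inv]
    exact hss.subset (mem_image_of_mem _ hy)
  -- I ⊆ φ(v⁻¹) I' ⊊ I'' so I = I'' hence φ(v⁻¹) I' ⊊ I, hence I' ⊊ φ(v) I : contradiction
  obtain ⟨y, hy⟩ := comp_nonempty hI
  have hII'' : I = I'' :=
    comp_eq_of_mem hI hI'' hy (hss2.subset (hII hy))
  have h1 : φ.toFun v⁻¹ '' I' ⊆ I := hII'' ▸ hss2.subset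
  have h2 : φ.toFun v⁻¹ '' I' = I := Subset.antisymm h1 hII
  have h3 : I' = φ.toFun v '' I := by
    rw [← h2, img_img, mul_inv_cancel, img_one]
  exact hss.ne h3.symm

/-- If the image of the closure of a gap under `φ(v)` is contained in a component `I'`,
then `v⁻¹` expands `I'`. -/
theorem expands_inv_of_gap (hP : IsBP φ S P) (hsym : ∀ s ∈ S, s⁻¹ ∈ S)
    {C I' : Set S1} (hC : C ∈ compsOf Pᶜ) (hI' : I' ∈ compsOf P) {v : Γ} (hv : v ∈ S)
    (hsub : φ.toFun v '' closure C ⊆ I') : ExpandsAt φ P I' v⁻¹ := by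
  apply expands_of_image_not_subset hP hI' (hsym v hv)
  intro h
  apply gap_not_subset_P hC
  intro y hy
  have : φ.toFun v y ∈ I' := hsub (mem_image_of_mem _ hy)
  have h2 : φ.toFun v⁻¹ (φ.toFun v y) ∈ φ.toFun v⁻¹ '' I' := mem_image_of_mem _ this
  rw [apply_inv_apply] at h2
  exact h h2

/-- The inductively defined set of "good" points: endpoints of gaps of all levels.
All good points lie in `P^∞`. -/
inductive Good (φ : RGp Γ) (S : Set Γ) (P : Set S1) : S1 → Prop
  | gapEnd (x : S1) (C : Set S1) (hC : C ∈ compsOf Pᶜ) (hx : x ∈ closure C) (hxP : x ∈ P) :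
      Good φ S P x
  | inner (x : S1) (I : Set S1) (e : Γ) (hI : I ∈ compsOf P) (hx : x ∈ I)
      (hxint : x ∈ interior P) (he : e ∈ S) (hexp : ExpandsAt φ P I e)
      (hgood : Good φ S P (φ.toFun e x)) : Good φ S P x

theorem good_mem_P {x : S1} (hx : Good φ S P x) : x ∈ P := by
  cases hx with
  | gapEnd x C hC hxc hxP => exact hxP
  | inner x I e hI hxI hxint he hexp hge => exact comp_subset hI hxI

theorem good_step (hP : IsBP φ S P) (hsym : ∀ s ∈ S, s⁻¹ ∈ S) {x : S1}
    (hx : Good φ S P x) {v : Γ} (hv : v ∈ S) : Good φ S P (φ.toFun v x) := by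
  cases hx with
  | gapEnd x C hC hxc hxP =>
    have hsharp : closure C ∈ compsSharp P := ⟨C, hC, rfl⟩
    rcases hP.2.2.2 (closure C) hsharp v hv with h4a | h4b
    · -- (4a): the image is again a gap closure; the image point is again an endpoint
      obtain ⟨C', hC', heq'⟩ := h4a
      have himgC : φ.toFun v '' C = C' := by
        have h1 : φ.toFun v '' C = φ.toFun v '' interior (closure C) := by
          rw [interior_closure_gap hP hC]
        rw [h1, img_interior, heq', interior_closure_gap hP hC']
      apply Good.gapEnd _ C' hC'
      · rw [← heq']; exact mem_image_of_mem _ hxc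
      · have hxnC : x ∉ C := fun h => (comp_subset hC h) hxP
        have hres : φ.toFun v x ∈ closure C' \ C' := by
          constructor
          · rw [← heq']; exact mem_image_of_mem _ hxc
          · rw [← himgC]
            rintro ⟨w, hw, hweq⟩
            exact hxnC (((φ.toFun v).injective hweq) ▸ hw)
        exact gap_residual_subset_P (P_closed hP.1) hC' hres
    · -- (4b): the image lands in the interior of P
      have hmem : φ.toFun v x ∈ interior P := h4b (mem_image_of_mem _ hxc)
      have hmemP : φ.toFun v x ∈ P := interior_subset hmem
      have hI' : connectedComponentIn P (φ.toFun v x) ∈ compsOf P := ⟨_, hmemP, rfl⟩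
      have hsub : φ.toFun v '' closure C ⊆ connectedComponentIn P (φ.toFun v x) := by
        apply IsPreconnected.subset_connectedComponentIn
        · exact ((comp_preconnected hC).closure).image _ (φ.toFun v).continuous.continuousOn
        · exact mem_image_of_mem _ hxc
        · exact fun y hy => interior_subset (h4b hy)
      have hexp' : ExpandsAt φ P (connectedComponentIn P (φ.toFun v x)) v⁻¹ :=
        expands_inv_of_gap hP hsym hC hI' hv hsub
      apply Good.inner _ _ v⁻¹ hI' (mem_connectedComponentIn hmemP) hmem (hsym v hv) hexp'
      rw [apply_inv_apply]
      exact Good.gapEnd _ C hC hxc hxP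
  | inner x I e hI hxI hxint he hexp hge =>
    by_cases hve : v = e
    · rwa [hve]
    · have hnexp : ¬ ExpandsAt φ P I v := fun hexp' => hve (expands_eq hP hI hv hexp' he hexp)
      obtain ⟨I'', hI'', hss⟩ := hP.2.2.1 I hI v hv hnexp
      have hxP : x ∈ P := comp_subset hI hxI
      have hIeq : I = connectedComponentIn P x :=
        comp_eq_of_mem hI ⟨x, hxP, rfl⟩ hxI (mem_connectedComponentIn hxP)
      have hMI : connectedComponentIn (interior P) x ⊆ I := by
        rw [hIeq]
        exact isPreconnected_connectedComponentIn.subset_connectedComponentIn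
          (mem_connectedComponentIn hxint)
          ((connectedComponentIn_subset _ _).trans interior_subset)
      have hmem : φ.toFun v x ∈ interior P := by
        have hsub : φ.toFun v '' connectedComponentIn (interior P) x ⊆ P := by
          rintro y ⟨w, hw, hwy⟩
          exact hwy ▸ comp_subset hI'' (hss.subset (mem_image_of_mem _ (hMI hw)))
        exact (interior_maximal hsub
          ((φ.toFun v).isOpenMap _ isOpen_interior.connectedComponentIn))
          (mem_image_of_mem _ (mem_connectedComponentIn hxint))
      have hmemI'' : φ.toFun v x ∈ I'' := hss.subset (mem_image_of_mem _ hxI)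
      have hexp' : ExpandsAt φ P I'' v⁻¹ := expands_inv_of_contract hP hsym hI hI'' hv hss
      apply Good.inner _ _ v⁻¹ hI'' hmemI'' hmem (hsym v hv) hexp'
      rw [apply_inv_apply]
      exact Good.inner x I e hI hxI hxint he hexp hge
end BPx

namespace BPx

variable {Γ : Type} [Group Γ] {φ : RGp Γ} {S : Set Γ} {P : Set S1}

theorem good_mem_iter (hP : IsBP φ S P) (hsym : ∀ s ∈ S, s⁻¹ ∈ S) (n : ℕ) :
    ∀ x : S1, Good φ S P x → x ∈ iterBP φ S P n := by
  induction n with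
  | zero => exact fun x hx => good_mem_P hx
  | succ k ih =>
    intro x hx
    show x ∈ ⋂ s ∈ insert (1:Γ) S, φ.toFun s '' iterBP φ S P k
    apply Set.mem_iInter₂.mpr
    intro s hs
    rcases hs with rfl | hsS
    · rw [img_one]; exact ih x hx
    · rw [mem_img_iff]
      exact ih _ (good_step hP hsym hx (hsym s hsS))

theorem good_mem_Pinf (hP : IsBP φ S P) (hsym : ∀ s ∈ S, s⁻¹ ∈ S) {x : S1}
    (hx : Good φ S P x) : x ∈ PinfBP φ S P :=
  Set.mem_iInter.mpr (fun n => good_mem_iter hP hsym n x hx)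

theorem iter_closed (hP : IsBP φ S P) (n : ℕ) : IsClosed (iterBP φ S P n) := by
  induction n with
  | zero => exact P_closed hP.1
  | succ k ih =>
    show IsClosed (⋂ s ∈ insert (1:Γ) S, φ.toFun s '' iterBP φ S P k)
    exact isClosed_biInter (fun s hs => ((φ.toFun s).isClosedMap _ ih))

/-- The image of a gap of `Q^n` with good residual under a generator (or identity)
is a gap of `Q^{n+1}`. -/
theorem gap_image (hP : IsBP φ S P) (hsym : ∀ s ∈ S, s⁻¹ ∈ S) {n : ℕ} {C : Set S1}
    (hC : C ∈ compsOf (iterBP φ S P n)ᶜ)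
    (hres : ∀ x ∈ closure C \ C, Good φ S P x)
    {v : Γ} (hv : v ∈ insert (1:Γ) S) :
    φ.toFun v '' C ∈ compsOf (iterBP φ S P (n+1))ᶜ := by
  have hQn : IsClosed (iterBP φ S P n) := iter_closed hP n
  apply mem_comps_of_residual
  · exact (φ.toFun v).isOpenMap _ (comp_isOpen hQn.isOpen_compl hC)
  · exact (comp_nonempty hC).image _
  · exact (comp_preconnected hC).image _ (φ.toFun v).continuous.continuousOn
  · intro y ⟨w, hw, hwy⟩
    rw [iter_compl_succ]
    exact Set.mem_iUnion₂.mpr ⟨v, hv, ⟨w, comp_subset hC hw, hwy⟩⟩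
  · rw [← img_closure, ← img_diff]
    apply Set.eq_empty_iff_forall_notMem.mpr
    rintro y ⟨⟨w, hw, hwy⟩, hy2⟩
    have hgw : Good φ S P w := hres w hw
    have hgy : Good φ S P y := by
      rcases hv with rfl | hvS
      · rw [coe_one] at hwy; rwa [← hwy]
      · rw [← hwy]; exact good_step hP hsym hgw hvS
    exact (Set.notMem_compl_iff.mpr (Set.mem_iInter.mp
      (good_mem_Pinf hP hsym hgy) (n+1))) hy2

/-- Every gap of `Q^n` has good residual. -/
theorem gap_structure (hP : IsBP φ S P) (hsym : ∀ s ∈ S, s⁻¹ ∈ S) (n : ℕ) :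
    ∀ C ∈ compsOf (iterBP φ S P n)ᶜ, ∀ x ∈ closure C \ C, Good φ S P x := by
  induction n with
  | zero =>
    intro C hC x hx
    exact Good.gapEnd x C hC hx.1 (gap_residual_subset_P (P_closed hP.1) hC hx)
  | succ k ih =>
    intro C hC x hx
    obtain ⟨x₀, hx₀⟩ := comp_nonempty hC
    have hx₀' : x₀ ∈ (iterBP φ S P (k+1))ᶜ := comp_subset hC hx₀
    rw [iter_compl_succ] at hx₀'
    obtain ⟨v, hv, y, hy, hyx⟩ := Set.mem_iUnion₂.mp hx₀'
    have hD : connectedComponentIn (iterBP φ S P k)ᶜ y ∈ compsOf (iterBP φ S P k)ᶜ :=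
      ⟨y, hy, rfl⟩
    have himg : φ.toFun v '' connectedComponentIn (iterBP φ S P k)ᶜ y
        ∈ compsOf (iterBP φ S P (k+1))ᶜ := gap_image hP hsym hD (ih _ hD) hv
    have hCeq : C = φ.toFun v '' connectedComponentIn (iterBP φ S P k)ᶜ y :=
      comp_eq_of_mem hC himg hx₀
        ⟨y, mem_connectedComponentIn hy, hyx⟩
    rw [hCeq] at hx
    rw [← img_closure, ← img_diff] at hx
    obtain ⟨w, hw, hwx⟩ := hx
    have hgw : Good φ S P w := ih _ hD w hw
    rcases hv with rfl | hvS
    · rw [coe_one] at hwx; rwa [← hwx]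
    · rw [← hwx]; exact good_step hP hsym hgw hvS

/-- Decomposition: every gap of `Q^{n+1}` is the image of a gap of `Q^n`. -/
theorem gap_decomp (hP : IsBP φ S P) (hsym : ∀ s ∈ S, s⁻¹ ∈ S) {n : ℕ} {C : Set S1}
    (hC : C ∈ compsOf (iterBP φ S P (n+1))ᶜ) :
    ∃ v ∈ insert (1:Γ) S, ∃ D ∈ compsOf (iterBP φ S P n)ᶜ, C = φ.toFun v '' D := by
  obtain ⟨x₀, hx₀⟩ := comp_nonempty hC
  have hx₀' : x₀ ∈ (iterBP φ S P (n+1))ᶜ := comp_subset hC hx₀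
  rw [iter_compl_succ] at hx₀'
  obtain ⟨v, hv, y, hy, hyx⟩ := Set.mem_iUnion₂.mp hx₀'
  have hD : connectedComponentIn (iterBP φ S P n)ᶜ y ∈ compsOf (iterBP φ S P n)ᶜ := ⟨y, hy, rfl⟩
  refine ⟨v, hv, _, hD, ?_⟩
  exact comp_eq_of_mem hC (gap_image hP hsym hD (gap_structure hP hsym n _ hD) hv) hx₀
    ⟨y, mem_connectedComponentIn hy, hyx⟩

theorem gap_persist (hP : IsBP φ S P) (hsym : ∀ s ∈ S, s⁻¹ ∈ S) {n : ℕ} {C : Set S1}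
    (hC : C ∈ compsOf (iterBP φ S P n)ᶜ) : C ∈ compsOf (iterBP φ S P (n+1))ᶜ := by
  have := gap_image hP hsym hC (gap_structure hP hsym n _ hC) (mem_insert _ _)
  rwa [img_one] at this

theorem gap_persist_le (hP : IsBP φ S P) (hsym : ∀ s ∈ S, s⁻¹ ∈ S) {m n : ℕ} (h : m ≤ n)
    {C : Set S1} (hC : C ∈ compsOf (iterBP φ S P m)ᶜ) : C ∈ compsOf (iterBP φ S P n)ᶜ := by
  induction n with
  | zero => simp_all
  | succ k ih =>
    rcases Nat.lt_or_ge m (k+1) with h1 | h1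
    · exact gap_persist hP hsym (ih (Nat.lt_succ_iff.mp h1))
    · have : m = k + 1 := le_antisymm h h1
      subst this; exact hC

theorem sharp_mono (hP : IsBP φ S P) (hsym : ∀ s ∈ S, s⁻¹ ∈ S) {m n : ℕ} (h : m ≤ n) :
    sharpSet (iterBP φ S P m) ⊆ sharpSet (iterBP φ S P n) := by
  intro x hx
  obtain ⟨K, ⟨C, hC, rfl⟩, hxK⟩ := hx
  exact ⟨closure C, ⟨C, gap_persist_le hP hsym h hC, rfl⟩, hxK⟩

/-- If a set avoiding `P^∞` is inside the sharp set of `Q^m`, it avoids `Q^m`. -/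
theorem subset_compl_of_sharp (hP : IsBP φ S P) (hsym : ∀ s ∈ S, s⁻¹ ∈ S) {m : ℕ}
    {A : Set S1} (hA : A ⊆ sharpSet (iterBP φ S P m)) (hdisj : ∀ x ∈ A, x ∉ PinfBP φ S P) :
    A ⊆ (iterBP φ S P m)ᶜ := by
  intro x hx
  obtain ⟨K, ⟨D, hD, rfl⟩, hxK⟩ := hA hx
  by_cases hxD : x ∈ D
  · exact comp_subset hD hxD
  · exfalso
    exact hdisj x hx (good_mem_Pinf hP hsym (gap_structure hP hsym m D hD x ⟨hxK, hxD⟩))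

end BPx

namespace BPx

variable {Γ : Type} [Group Γ] {φ : RGp Γ} {S : Set Γ} {P : Set S1}

theorem comp_P_closed (h : FinDisjClosedArcs P) {I : Set S1} (hI : I ∈ compsOf P) :
    IsClosed I := by
  obtain ⟨a, b, hab, hb, heq⟩ := comp_arc h hI
  rw [heq]
  exact (isCompact_Icc.image coe_cont).isClosed

theorem iter_zero : iterBP φ S P 0 = P := rfl

/-- If the image of a gap of `Q^n` under a generator `u` escapes the gaps of `Q^n`
while staying in a component `I'` of `P`, then `u⁻¹` expands `I'`. -/
theorem expander_of_decomp (hP : IsBP φ S P) (hsym : ∀ s ∈ S, s⁻¹ ∈ S) {n : ℕ}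
    (IH : ∀ k, n = k + 1 → ∀ D ∈ compsOf (iterBP φ S P n)ᶜ,
      D ∉ compsOf (iterBP φ S P k)ᶜ →
      ∃ ID, ID ∈ compsOf P ∧ ∃ eD ∈ S, D ⊆ ID ∧ ExpandsAt φ P ID eD ∧
        φ.toFun eD '' D ∈ compsOf (iterBP φ S P k)ᶜ)
    {D : Set S1} {u : Γ} (hu : u ∈ S) (hD : D ∈ compsOf (iterBP φ S P n)ᶜ)
    (hnew : φ.toFun u '' D ∉ compsOf (iterBP φ S P n)ᶜ)
    {I' : Set S1} (hI' : I' ∈ compsOf P) (hsub : φ.toFun u '' D ⊆ I') :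
    ExpandsAt φ P I' u⁻¹ := by
  cases n with
  | zero =>
    apply expands_inv_of_gap hP hsym (iter_zero (φ := φ) (S := S) (P := P) ▸ hD) hI' hu
    rw [img_closure]
    calc closure (φ.toFun u '' D) ⊆ closure I' := closure_mono hsub
      _ = I' := IsClosed.closure_eq (comp_P_closed hP.1 hI')
  | succ k =>
    by_cases hDold : D ∈ compsOf (iterBP φ S P k)ᶜ
    · exact absurd (gap_image hP hsym hDold (gap_structure hP hsym k _ hDold)
        (mem_insert_of_mem _ hu)) hnew
    · obtain ⟨ID, hIDc, eD, heD, hDsub, hexpD, hdrop⟩ := IH k rfl D hD hDold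
      by_cases hueD : u = eD
      · subst hueD
        exact absurd (gap_persist hP hsym hdrop) hnew
      · have hnexp : ¬ ExpandsAt φ P ID u := fun h => hueD (expands_eq hP hIDc hu h heD hexpD)
        obtain ⟨I₃, hI₃, hss⟩ := hP.2.2.1 ID hIDc u hu hnexp
        obtain ⟨y, hy⟩ := (comp_nonempty hD).image (φ.toFun u)
        have hI₃I' : I₃ = I' := comp_eq_of_mem hI₃ hI'
          (hss.subset ((image_mono hDsub) hy)) (hsub hy)
        rw [← hI₃I']
        exact expands_inv_of_contract hP hsym hIDc hI₃ hu hss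

end BPx

namespace BPx

variable {Γ : Type} [Group Γ]

/-- The structural data attached to a "new" gap of `Q^{n+1}`. -/
def PhiData (φ : RGp Γ) (S : Set Γ) (P : Set S1) (n : ℕ) (C : Set S1) : Prop :=
  ∃ I, I ∈ compsOf P ∧ ∃ e ∈ S, C ⊆ interior P ∧ C ⊆ I ∧ ExpandsAt φ P I e ∧
    φ.toFun e '' C ∈ compsOf (iterBP φ S P n)ᶜ ∧
    (∀ k, n = k + 1 → φ.toFun e '' C ∉ compsOf (iterBP φ S P k)ᶜ) ∧
    (∀ w ∈ S, w ≠ e → φ.toFun w '' C ∉ compsOf (iterBP φ S P (n+1))ᶜ)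

variable {φ : RGp Γ} {S : Set Γ} {P : Set S1}

theorem phi_aux (hP : IsBP φ S P) (hsym : ∀ s ∈ S, s⁻¹ ∈ S) (n : ℕ)
    (IH : ∀ k, n = k + 1 → ∀ C ∈ compsOf (iterBP φ S P n)ᶜ,
      C ∉ compsOf (iterBP φ S P k)ᶜ → PhiData φ S P k C) :
    ∀ C ∈ compsOf (iterBP φ S P (n+1))ᶜ, C ∉ compsOf (iterBP φ S P n)ᶜ →
      PhiData φ S P n C := by
  intro C hC hCnew
  have IH' : ∀ k, n = k + 1 → ∀ D ∈ compsOf (iterBP φ S P n)ᶜ,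
      D ∉ compsOf (iterBP φ S P k)ᶜ →
      ∃ ID, ID ∈ compsOf P ∧ ∃ eD ∈ S, D ⊆ ID ∧ ExpandsAt φ P ID eD ∧
        φ.toFun eD '' D ∈ compsOf (iterBP φ S P k)ᶜ := by
    intro k hk D hD hDnew
    obtain ⟨ID, h1, eD, h2, _, h4, h5, h6, _⟩ := IH k hk D hD hDnew
    exact ⟨ID, h1, eD, h2, h4, h5, h6⟩
  -- Step 1: C lies in the interior of P, inside a single component I.
  have hCsub' : C ⊆ Pᶜ ∪ interior P := by
    intro x hx
    by_cases hxP : x ∈ P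
    · by_cases hxi : x ∈ interior P
      · exact Or.inr hxi
      · exfalso
        obtain ⟨C₀, hC₀, hxc⟩ := endpoint_closure_gap hP hxP hxi
        have hgood : Good φ S P x := Good.gapEnd x C₀ hC₀ hxc hxP
        have hxQ : x ∈ iterBP φ S P (n+1) :=
          Set.mem_iInter.mp (good_mem_Pinf hP hsym hgood) (n+1)
        exact (comp_subset hC hx) hxQ
    · exact Or.inl hxP
  have hCint : C ⊆ interior P := by
    by_cases hCP : (C ∩ Pᶜ).Nonempty
    · exfalso
      have hCPc : C ⊆ Pᶜ := by
        refine IsPreconnected.subset_left_of_subset_union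
          (P_closed hP.1).isOpen_compl isOpen_interior ?_ hCsub' hCP (comp_preconnected hC)
        exact Set.disjoint_left.mpr (fun y hy hy2 => hy (interior_subset hy2))
      obtain ⟨x, hx⟩ := comp_nonempty hC
      have hC₀ : connectedComponentIn Pᶜ x ∈ compsOf Pᶜ := ⟨x, hCPc hx, rfl⟩
      have hC₀' : connectedComponentIn Pᶜ x ∈ compsOf (iterBP φ S P n)ᶜ := by
        have : connectedComponentIn Pᶜ x ∈ compsOf (iterBP φ S P 0)ᶜ := hC₀
        exact gap_persist_le hP hsym (Nat.zero_le n) this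
      have hC₀sub : connectedComponentIn Pᶜ x ⊆ (iterBP φ S P (n+1))ᶜ := by
        intro y hy
        exact fun hyQ => (connectedComponentIn_subset _ _ hy) (iter_le φ S P (Nat.zero_le _) hyQ)
      have h1 : connectedComponentIn Pᶜ x ⊆ C :=
        subset_comp_of_mem hC isPreconnected_connectedComponentIn hC₀sub
          (mem_connectedComponentIn (hCPc hx)) hx
      have h2 : C ⊆ connectedComponentIn Pᶜ x :=
        (comp_preconnected hC).subset_connectedComponentIn hx hCPc
      have : C ∈ compsOf (iterBP φ S P n)ᶜ := by
        rw [Subset.antisymm h2 h1]; exact hC₀'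
      exact hCnew this
    · intro x hx
      rcases hCsub' hx with h | h
      · exact absurd ⟨x, hx, h⟩ hCP
      · exact h
  obtain ⟨x₀, hx₀⟩ := comp_nonempty hC
  have hx₀P : x₀ ∈ P := interior_subset (hCint hx₀)
  have hI : connectedComponentIn P x₀ ∈ compsOf P := ⟨x₀, hx₀P, rfl⟩
  set I := connectedComponentIn P x₀ with hIdef
  have hCI : C ⊆ I :=
    (comp_preconnected hC).subset_connectedComponentIn hx₀
      (fun y hy => interior_subset (hCint hy))
  -- Step 2: decompose C = φ(v) '' D with v ∈ S
  obtain ⟨v, hv, D, hD, hCeq⟩ := gap_decomp hP hsym hC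
  have hvS : v ∈ S := by
    rcases hv with rfl | hvS
    · exfalso; rw [img_one] at hCeq; exact hCnew (hCeq ▸ hD)
    · exact hvS
  -- Step 3: the expander of I is v⁻¹
  have hCnew' : φ.toFun v '' D ∉ compsOf (iterBP φ S P n)ᶜ := hCeq ▸ hCnew
  have hexp : ExpandsAt φ P I v⁻¹ :=
    expander_of_decomp hP hsym IH' hvS hD hCnew' hI (hCeq ▸ hCI)
  have hdropeq : φ.toFun v⁻¹ '' C = D := by
    rw [hCeq, img_inv_img]
  refine ⟨I, hI, v⁻¹, hsym v hvS, hCint, hCI, hexp, ?_, ?_, ?_⟩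
  · rw [hdropeq]; exact hD
  · intro k hk hcon
    subst hk
    rw [hdropeq] at hcon
    exact hCnew (hCeq ▸ gap_image hP hsym hcon (gap_structure hP hsym k _ hcon)
      (mem_insert_of_mem _ hvS))
  · -- parity / uniqueness clause
    intro w hw hwne h2
    have hnexpw : ¬ ExpandsAt φ P I w := fun h => hwne (expands_eq hP hI hw h (hsym v hvS) hexp)
    obtain ⟨I₂, hI₂, hssw⟩ := hP.2.2.1 I hI w hw hnexpw
    have hC₂I₂ : φ.toFun w '' C ⊆ I₂ := (image_mono hCI).trans hssw.subset
    have hexpw : ExpandsAt φ P I₂ w⁻¹ := expands_inv_of_contract hP hsym hI hI₂ hw hssw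
    obtain ⟨y₂, hy₂⟩ := (comp_nonempty hC).image (φ.toFun w)
    by_cases h2old : φ.toFun w '' C ∈ compsOf (iterBP φ S P n)ᶜ
    · cases n with
      | zero =>
        exact (comp_subset h2old hy₂) (comp_subset hI₂ (hC₂I₂ hy₂))
      | succ k =>
        by_cases h2older : φ.toFun w '' C ∈ compsOf (iterBP φ S P k)ᶜ
        · apply hCnew
          have := gap_image hP hsym h2older (gap_structure hP hsym k _ h2older)
            (mem_insert_of_mem _ (hsym w hw))
          rwa [img_inv_img] at this
        · obtain ⟨I₂', hI₂', e₂, he₂, _, hC₂I₂', hexp₂, hdrop₂, _, _⟩ :=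
            IH k rfl _ h2old h2older
          have hI₂eq : I₂' = I₂ := comp_eq_of_mem hI₂' hI₂ (hC₂I₂' hy₂) (hC₂I₂ hy₂)
          have he₂w : e₂ = w⁻¹ :=
            expands_eq hP hI₂ he₂ (hI₂eq ▸ hexp₂) (hsym w hw) hexpw
          apply hCnew
          apply gap_persist_le hP hsym (Nat.le_succ k)
          rw [he₂w] at hdrop₂
          rwa [img_inv_img] at hdrop₂
    · obtain ⟨u₂, hu₂, D₂, hD₂, hC₂eq⟩ := gap_decomp hP hsym h2
      have hu₂S : u₂ ∈ S := by
        rcases hu₂ with rfl | hu₂S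
        · exfalso; rw [img_one] at hC₂eq; exact h2old (hC₂eq ▸ hD₂)
        · exact hu₂S
      have hexpu₂ : ExpandsAt φ P I₂ u₂⁻¹ :=
        expander_of_decomp hP hsym IH' hu₂S hD₂ (hC₂eq ▸ h2old) hI₂ (hC₂eq ▸ hC₂I₂)
      have huw : u₂⁻¹ = w⁻¹ :=
        expands_eq hP hI₂ (hsym u₂ hu₂S) hexpu₂ (hsym w hw) hexpw
      have hu₂w : u₂ = w := by
        have := congrArg (·⁻¹) huw; simpa using this
      apply hCnew
      have : C = D₂ := by
        rw [hu₂w] at hC₂eq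
        exact Set.image_injective.mpr (φ.toFun w).injective hC₂eq
      rw [this]; exact hD₂

theorem phi (hP : IsBP φ S P) (hsym : ∀ s ∈ S, s⁻¹ ∈ S) :
    ∀ n : ℕ, ∀ C ∈ compsOf (iterBP φ S P (n+1))ᶜ, C ∉ compsOf (iterBP φ S P n)ᶜ →
      PhiData φ S P n C := by
  intro n
  induction n with
  | zero => exact phi_aux hP hsym 0 (fun k hk => by omega)
  | succ m ih =>
    apply phi_aux hP hsym (m+1)
    intro k hk
    have : k = m := by omega
    subst this
    exact ih

end BPx

open BPx

/-- For a component `J` of `P^∞_♯` of level `l ≥ 2`, there is a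
unique `s ∈ S` with `lev(φ(s)J) = l - 1`, and every other `s ∈ S` has
`lev(φ(s)J) = l + 1`. -/
theorem level_step (Γ : Type) [Group Γ] (S : Set Γ) (hfin : S.Finite)
    (hsym : ∀ s ∈ S, s⁻¹ ∈ S) (hgen : Subgroup.closure S = ⊤)
    (φ : RGp Γ) (P : Set S1) (hP : IsBP φ S P)
    (J : Set S1) (hJ : J ∈ compsSharp (PinfBP φ S P))
    (l : ℕ) (hl : 2 ≤ l) (hlev : HasLevel φ S P J l) :
    (∃! s, s ∈ S ∧ HasLevel φ S P (φ.toFun s '' J) (l - 1)) ∧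
    ∀ s ∈ S, ¬ HasLevel φ S P (φ.toFun s '' J) (l - 1) →
      HasLevel φ S P (φ.toFun s '' J) (l + 1) := by
  classical
  obtain ⟨Cinf, hCinf, hJeq⟩ := hJ
  obtain ⟨k, rfl⟩ : ∃ k, l = k + 2 := ⟨l - 2, by omega⟩
  have hlev1 : J ⊆ sharpSet (iterBP φ S P (k+1)) := hlev.2.1
  have hlevnot : ¬ J ⊆ sharpSet (iterBP φ S P k) := hlev.2.2 (k+1) (by omega) (by omega)
  have hdisj : ∀ x ∈ Cinf, x ∉ PinfBP φ S P := fun x hx => comp_subset hCinf hx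
  have hCsub : Cinf ⊆ (iterBP φ S P (k+1))ᶜ :=
    subset_compl_of_sharp hP hsym (fun x hx => hlev1 (hJeq ▸ subset_closure hx)) hdisj
  have hCgap : Cinf ∈ compsOf (iterBP φ S P (k+1))ᶜ := by
    apply comp_mono_down hCinf _ hCsub
    exact fun y hy hy2 => hy (Pinf_subset φ S P (k+1) hy2)
  have hCnew : Cinf ∉ compsOf (iterBP φ S P k)ᶜ := by
    intro h
    apply hlevnot
    rw [hJeq]
    exact fun x hx => ⟨closure Cinf, ⟨Cinf, h, rfl⟩, hx⟩
  obtain ⟨I, hI, e, he, hCint, hCI, hexp, hdrop, hdropnew, hpar⟩ :=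
    phi hP hsym k Cinf hCgap hCnew
  have himgJ : ∀ g : Γ, φ.toFun g '' J = closure (φ.toFun g '' Cinf) := by
    intro g; rw [hJeq, img_closure]
  have hdisj' : ∀ g ∈ S, ∀ x ∈ φ.toFun g '' Cinf, x ∉ PinfBP φ S P := by
    rintro g hg x ⟨w, hw, hwx⟩ hx
    apply hdisj w hw
    have h1 : φ.toFun g⁻¹ '' PinfBP φ S P = PinfBP φ S P :=
      Pinf_invariant φ S P hsym (hsym g hg)
    have h2 : φ.toFun g⁻¹ x ∈ φ.toFun g⁻¹ '' PinfBP φ S P := mem_image_of_mem _ hx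
    rw [h1] at h2
    rwa [← hwx, apply_inv_apply] at h2
  have hdropLevel : HasLevel φ S P (φ.toFun e '' J) (k+2-1) := by
    refine ⟨by omega, ?_, ?_⟩
    · show φ.toFun e '' J ⊆ sharpSet (iterBP φ S P (k+1-1))
      rw [himgJ]
      exact fun x hx => ⟨closure (φ.toFun e '' Cinf), ⟨_, hdrop, rfl⟩, hx⟩
    · intro m hm hmlt hcon
      obtain ⟨k', rfl⟩ : ∃ k', k = k' + 1 := ⟨k - 1, by omega⟩
      have hsharp : φ.toFun e '' J ⊆ sharpSet (iterBP φ S P k') :=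
        fun x hx => sharp_mono hP hsym (by omega : m - 1 ≤ k') (hcon hx)
      have h1 : φ.toFun e '' Cinf ⊆ (iterBP φ S P k')ᶜ :=
        subset_compl_of_sharp hP hsym
          (fun x hx => hsharp (himgJ e ▸ subset_closure hx)) (hdisj' e he)
      have h2 : φ.toFun e '' Cinf ∈ compsOf (iterBP φ S P k')ᶜ :=
        comp_mono_down hdrop
          (compl_subset_compl.mpr (iter_le φ S P (by omega : k' ≤ k' + 1))) h1
      exact hdropnew k' rfl h2
  constructor
  · refine ⟨e, ⟨he, hdropLevel⟩, ?_⟩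
    rintro t ⟨htS, htLevel⟩
    by_contra htne
    have hsharp : φ.toFun t '' J ⊆ sharpSet (iterBP φ S P k) := htLevel.2.1
    have h1 : φ.toFun t '' Cinf ⊆ (iterBP φ S P k)ᶜ :=
      subset_compl_of_sharp hP hsym
        (fun x hx => hsharp (himgJ t ▸ subset_closure hx)) (hdisj' t htS)
    have h2 : φ.toFun t '' Cinf ∈ compsOf (iterBP φ S P (k+2))ᶜ :=
      gap_image hP hsym hCgap (gap_structure hP hsym (k+1) _ hCgap)
        (Set.mem_insert_of_mem _ htS)
    have h3 : φ.toFun t '' Cinf ∈ compsOf (iterBP φ S P k)ᶜ :=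
      comp_mono_down h2 (compl_subset_compl.mpr (iter_le φ S P (by omega : k ≤ k + 2))) h1
    exact hpar t htS htne (gap_persist hP hsym h3)
  · intro t htS htnot
    by_cases hte : t = e
    · subst hte; exact absurd hdropLevel htnot
    · have h2 : φ.toFun t '' Cinf ∈ compsOf (iterBP φ S P (k+2))ᶜ :=
        gap_image hP hsym hCgap (gap_structure hP hsym (k+1) _ hCgap)
          (Set.mem_insert_of_mem _ htS)
      refine ⟨by omega, ?_, ?_⟩
      · show φ.toFun t '' J ⊆ sharpSet (iterBP φ S P (k+2+1-1))
        rw [himgJ]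
        exact fun x hx => ⟨closure (φ.toFun t '' Cinf), ⟨_, h2, rfl⟩, hx⟩
      · intro m hm hmlt hcon
        have hsharp : φ.toFun t '' J ⊆ sharpSet (iterBP φ S P (k+1)) :=
          fun x hx => sharp_mono hP hsym (by omega : m - 1 ≤ k+1) (hcon hx)
        have h1 : φ.toFun t '' Cinf ⊆ (iterBP φ S P (k+1))ᶜ :=
          subset_compl_of_sharp hP hsym
            (fun x hx => hsharp (himgJ t ▸ subset_closure hx)) (hdisj' t htS)
        have h3 : φ.toFun t '' Cinf ∈ compsOf (iterBP φ S P (k+1))ᶜ :=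
          comp_mono_down h2
            (compl_subset_compl.mpr (iter_le φ S P (by omega : k+1 ≤ k + 2))) h1
        exact hpar t htS hte h3
end
end

section
/- Let G be a group and φ ∈ R_G a homomorphism whose action on S¹ is minimal and which admits no φ(G)-invariant Borel probability measure. If U ∈ Homeo₊(S¹) commutes with φ(g) for every g ∈ G, then U^k = Id for some positive integer k. -/
noncomputable section

instance : Fact ((0:ℝ) < 1) := ⟨one_pos⟩

/-- Type 0: there is an invariant Borel probability measure on the circle. -/
def IsType0 {G : Type} [Group G] (φ : RGp G) : Prop :=
  ∃ μ : MeasureTheory.Measure S1, MeasureTheory.IsProbabilityMeasure μ ∧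
    ∀ g, MeasureTheory.Measure.map (φ.toFun g) μ = μ

/-- The `k`-fold self covering map `π_k` of the circle. -/
def expk (k : ℕ) : S1 → S1 := fun x => k • x

/-- `ψ` is a `k`-fold lift of `φ`: `φ(g) ∘ π_k = π_k ∘ ψ(g)`. -/
def IsKFoldLift {G : Type} [Group G] (k : ℕ) (ψ φ : RGp G) : Prop :=
  ∀ g x, φ.toFun g (expk k x) = expk k (ψ.toFun g x)

/-- Minimal action: every orbit is dense. -/
def MinimalAct {G : Type} [Group G] (φ : RGp G) : Prop :=
  ∀ x : S1, Dense (Set.range fun g => φ.toFun g x)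

/-- `ψ` is a minimal model of `φ`: a minimal action semiconjugate to `φ`. -/
def IsMinimalModel {G : Type} [Group G] (φ ψ : RGp G) : Prop :=
  MinimalAct ψ ∧ Semiconj φ ψ

/-- Type `k` (`k ≥ 1`): not type 0, a minimal model is a `k`-fold lift of some
homomorphism, and `k` is maximal with this property. -/
def IsTypeK {G : Type} [Group G] (k : ℕ) (φ : RGp G) : Prop :=
  ¬ IsType0 φ ∧ ∃ ψ : RGp G, IsMinimalModel φ ψ ∧
    (∃ χ : RGp G, IsKFoldLift k ψ χ) ∧
    ∀ m : ℕ, (∃ χ : RGp G, IsKFoldLift m ψ χ) → m ≤ k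

/-! ## Auxiliary theory -/

namespace CHF
open CircleDeg1Lift Set Function MeasureTheory

lemma S1.coe_int (n : ℤ) : ((n : ℝ) : S1) = 0 := by
  rw [AddCircle.coe_eq_zero_iff]
  exact ⟨n, by simp⟩

lemma S1.coe_add_int (x : ℝ) (n : ℤ) : ((x + n : ℝ) : S1) = (x : S1) := by
  have h : ((x + n : ℝ) : S1) = (x : S1) + ((n:ℝ) : S1) := rfl
  rw [h, S1.coe_int, add_zero]

lemma exists_lift (f : S1 ≃ₜ S1) (hf : IsOP f) :
    ∃ F : CircleDeg1Liftˣ, Continuous ⇑(F : CircleDeg1Lift) ∧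
      ∀ x : ℝ, (((F : CircleDeg1Lift) x : ℝ) : S1) = f (x : S1) := by
  obtain ⟨F₀, hmono, hadd, hproj⟩ := hf
  set Fc : CircleDeg1Lift := ⟨⟨F₀, hmono.monotone⟩, hadd⟩ with hFc
  have hFc_apply : ∀ x, Fc x = F₀ x := fun _ => rfl
  have hsurj : Function.Surjective Fc := by
    intro y
    obtain ⟨s, hs⟩ := QuotientAddGroup.mk_surjective (f.symm ((y : ℝ) : S1))
    have h1 : f (s : S1) = ((y:ℝ) : S1) := by rw [hs]; exact f.apply_symm_apply _
    have h2 : ((F₀ s : ℝ) : S1) = ((y : ℝ) : S1) := by rw [hproj]; exact h1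
    have h3 : -(F₀ s) + y ∈ AddSubgroup.zmultiples (1:ℝ) := (QuotientAddGroup.eq).1 h2
    obtain ⟨n, hn⟩ := h3
    simp only [zsmul_eq_mul, mul_one] at hn
    refine ⟨s + n, ?_⟩
    rw [hFc_apply] at *
    have h4 := Fc.map_add_int s n
    rw [hFc_apply] at h4
    rw [show F₀ (s + n) = F₀ s + n from h4]
    linarith
  have hbij : Function.Bijective Fc := ⟨hmono.injective, hsurj⟩
  obtain ⟨Fu, hFu⟩ := isUnit_iff_bijective.2 hbij
  refine ⟨Fu, ?_, ?_⟩
  · rw [hFu]; exact (continuous_iff_surjective _).2 hsurj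
  · intro x; rw [hFu]; exact hproj x

variable (F : CircleDeg1Liftˣ)

/-- Key inequality: if some power-translate of `F` moves `c` down, its translation number
is nonpositive. -/
lemma key_le {k m : ℤ} {c : ℝ} (h : ((F^k : CircleDeg1Liftˣ) : CircleDeg1Lift) c + m ≤ c) :
    (k : ℝ) * translationNumber (F : CircleDeg1Lift) + m ≤ 0 := by
  set g : CircleDeg1Lift :=
    ((F^k : CircleDeg1Liftˣ) : CircleDeg1Lift) * ((translate (Multiplicative.ofAdd (m:ℝ)) : CircleDeg1Liftˣ) : CircleDeg1Lift) with hg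
  have hcomm : Commute ((F^k : CircleDeg1Liftˣ) : CircleDeg1Lift)
      ((translate (Multiplicative.ofAdd (m:ℝ)) : CircleDeg1Liftˣ) : CircleDeg1Lift) := by
    rw [commute_iff_commute]
    intro x
    simp only [CircleDeg1Lift.translate_apply]
    exact ((F^k : CircleDeg1Liftˣ) : CircleDeg1Lift).map_int_add m x
  have hτg : translationNumber g = (k : ℝ) * translationNumber (F : CircleDeg1Lift) + m := by
    rw [hg, translationNumber_mul_of_commute hcomm, translationNumber_zpow,
      translationNumber_translate]
  have hgc : g c ≤ c + (0 : ℤ) := by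
    have h6 : g c = ((m:ℝ)) + ((F^k : CircleDeg1Liftˣ) : CircleDeg1Lift) c := by
      rw [hg, mul_apply, CircleDeg1Lift.translate_apply]
      exact ((F^k : CircleDeg1Liftˣ) : CircleDeg1Lift).map_int_add m c
    rw [h6]; push_cast; linarith
  have h5 := translationNumber_le_of_le_add_int g hgc
  rw [hτg] at h5
  push_cast at h5
  linarith

lemma key_compare {b x : ℝ} {k m j i : ℤ}
    (h1 : ((F^k : CircleDeg1Liftˣ) : CircleDeg1Lift) b + m ≤ x)
    (h2 : x ≤ ((F^j : CircleDeg1Liftˣ) : CircleDeg1Lift) b + i) :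
    (k:ℝ) * translationNumber (F : CircleDeg1Lift) + m
      ≤ (j:ℝ) * translationNumber (F : CircleDeg1Lift) + i := by
  set c := ((F^j : CircleDeg1Liftˣ) : CircleDeg1Lift) b with hc
  have hpow : ((F^(k-j) : CircleDeg1Liftˣ) : CircleDeg1Lift) c
      = ((F^k : CircleDeg1Liftˣ) : CircleDeg1Lift) b := by
    have h0 : (F^(k-j) : CircleDeg1Liftˣ) * (F^j) = F^k := by
      rw [← zpow_add]; ring_nf
    calc ((F^(k-j) : CircleDeg1Liftˣ) : CircleDeg1Lift) c
        = (((F^(k-j) : CircleDeg1Liftˣ) * (F^j) : CircleDeg1Liftˣ) : CircleDeg1Lift) b := by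
          rw [Units.val_mul, mul_apply]
      _ = ((F^k : CircleDeg1Liftˣ) : CircleDeg1Lift) b := by rw [h0]
  have h3 : ((F^(k-j) : CircleDeg1Liftˣ) : CircleDeg1Lift) c + ((m - i : ℤ) : ℝ) ≤ c := by
    rw [hpow]; push_cast; linarith
  have h4 : ((k - j : ℤ) : ℝ) * translationNumber (F : CircleDeg1Lift) + ((m - i : ℤ)) ≤ 0 := by
    have h7 := key_le F (k := k - j) (m := m - i) (c := c) (by exact_mod_cast h3)
    exact h7
  push_cast at h4
  linarith

/-! ### the semiconjugacy function -/

def up (b x : ℝ) : Set ℝ :=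
  {v | ∃ k m : ℤ, v = k * translationNumber (F : CircleDeg1Lift) + m ∧
    x ≤ ((F^k : CircleDeg1Liftˣ) : CircleDeg1Lift) b + m}

def lo (b x : ℝ) : Set ℝ :=
  {v | ∃ k m : ℤ, v = k * translationNumber (F : CircleDeg1Lift) + m ∧
    ((F^k : CircleDeg1Liftˣ) : CircleDeg1Lift) b + m ≤ x}

noncomputable def Hb (b x : ℝ) : ℝ := sInf (up F b x)

def DenseVals : Prop :=
  ∀ a b : ℝ, a < b → ∃ k m : ℤ,
    a < (k:ℝ) * translationNumber (F : CircleDeg1Lift) + m ∧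
    (k:ℝ) * translationNumber (F : CircleDeg1Lift) + m < b

variable {F}

lemma Fz_zero_apply (b : ℝ) : ((F^(0:ℤ) : CircleDeg1Liftˣ) : CircleDeg1Lift) b = b := by
  norm_num

lemma up_nonempty (b x : ℝ) : (up F b x).Nonempty := by
  refine ⟨(0:ℤ) * translationNumber (F : CircleDeg1Lift) + (⌈x - b⌉ : ℤ), 0, ⌈x - b⌉, rfl, ?_⟩
  rw [Fz_zero_apply]
  have := Int.le_ceil (x - b)
  linarith

lemma lo_nonempty (b x : ℝ) : (lo F b x).Nonempty := by
  refine ⟨(0:ℤ) * translationNumber (F : CircleDeg1Lift) + (⌊x - b⌋ : ℤ), 0, ⌊x - b⌋, rfl, ?_⟩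
  rw [Fz_zero_apply]
  have := Int.floor_le (x - b)
  linarith

lemma lo_le_up {b x : ℝ} {v w : ℝ} (hv : v ∈ lo F b x) (hw : w ∈ up F b x) : v ≤ w := by
  obtain ⟨k, m, rfl, hk⟩ := hv
  obtain ⟨j, i, rfl, hj⟩ := hw
  exact key_compare F hk hj

lemma up_bddBelow (b x : ℝ) : BddBelow (up F b x) := by
  obtain ⟨v, hv⟩ := lo_nonempty (F := F) b x
  exact ⟨v, fun w hw => lo_le_up hv hw⟩

lemma lo_bddAbove (b x : ℝ) : BddAbove (lo F b x) := by
  obtain ⟨w, hw⟩ := up_nonempty (F := F) b x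
  exact ⟨w, fun v hv => lo_le_up hv hw⟩

lemma Hb_le {b x w : ℝ} (hw : w ∈ up F b x) : Hb F b x ≤ w := csInf_le (up_bddBelow b x) hw

lemma le_Hb {b x v : ℝ} (hv : v ∈ lo F b x) : v ≤ Hb F b x :=
  le_csInf (up_nonempty b x) fun _ hw => lo_le_up hv hw

lemma Hb_mono (b : ℝ) : Monotone (Hb F b) := by
  intro x y hxy
  refine le_csInf (up_nonempty b y) fun w hw => ?_
  obtain ⟨k, m, rfl, hk⟩ := hw
  exact Hb_le ⟨k, m, rfl, hxy.trans hk⟩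

lemma Hb_add_int (b x : ℝ) (n : ℤ) : Hb F b (x + n) = Hb F b x + n := by
  have h1 : Hb F b (x + n) ≤ Hb F b x + n := by
    have h0 : ∀ w ∈ up F b x, Hb F b (x + n) - n ≤ w := by
      rintro w ⟨k, m, rfl, hk⟩
      have hmem : ((k:ℝ) * translationNumber (F : CircleDeg1Lift) + m) + n ∈ up F b (x + n) := by
        refine ⟨k, m + n, by push_cast; ring, ?_⟩
        push_cast
        linarith
      have := Hb_le hmem
      linarith
    have h3 : Hb F b (x + n) - n ≤ sInf (up F b x) := le_csInf (up_nonempty b x) h0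
    have h4 : sInf (up F b x) = Hb F b x := rfl
    linarith
  have h2 : Hb F b x + n ≤ Hb F b (x + n) := by
    have h0 : ∀ w ∈ up F b (x + n), Hb F b x + n ≤ w := by
      rintro w ⟨k, m, rfl, hk⟩
      have hmem : ((k:ℝ) * translationNumber (F : CircleDeg1Lift) + m) - n ∈ up F b x := by
        refine ⟨k, m - n, by push_cast; ring, ?_⟩
        push_cast
        linarith
      have := Hb_le hmem
      linarith
    have h3 : Hb F b x + n ≤ sInf (up F b (x + n)) := le_csInf (up_nonempty b (x + n)) h0
    have h4 : sInf (up F b (x + n)) = Hb F b (x + n) := rfl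
    linarith
  linarith

lemma sSup_lo_eq (hd : DenseVals F) (b x : ℝ) : sSup (lo F b x) = Hb F b x := by
  refine le_antisymm (csSup_le (lo_nonempty b x) fun v hv => le_Hb hv) ?_
  by_contra hlt
  push_neg at hlt
  obtain ⟨k, m, h1, h2⟩ := hd _ _ hlt
  rcases le_total (((F^k : CircleDeg1Liftˣ) : CircleDeg1Lift) b + (m:ℝ)) x with h | h
  · exact absurd (le_csSup (lo_bddAbove b x) ⟨k, m, rfl, h⟩) (by linarith)
  · exact absurd (Hb_le ⟨k, m, rfl, h⟩) (by linarith)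

lemma Hb_le_add (b c x : ℝ) : Hb F b x ≤ Hb F b c + Hb F c x := by
  have key : ∀ w ∈ up F b c, ∀ v ∈ up F c x, Hb F b x ≤ v + w := by
    rintro w ⟨k, m, rfl, hk⟩ v ⟨j, i, rfl, hj⟩
    refine Hb_le ⟨j + k, m + i, by push_cast; ring, ?_⟩
    have h1 : ((F^j : CircleDeg1Liftˣ) : CircleDeg1Lift) c
        ≤ ((F^j : CircleDeg1Liftˣ) : CircleDeg1Lift)
          (((F^k : CircleDeg1Liftˣ) : CircleDeg1Lift) b + m) :=
      ((F^j : CircleDeg1Liftˣ) : CircleDeg1Lift).monotone hk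
    have h2 : ((F^j : CircleDeg1Liftˣ) : CircleDeg1Lift)
          (((F^k : CircleDeg1Liftˣ) : CircleDeg1Lift) b + m)
        = ((F^j : CircleDeg1Liftˣ) : CircleDeg1Lift)
          (((F^k : CircleDeg1Liftˣ) : CircleDeg1Lift) b) + m :=
      ((F^j : CircleDeg1Liftˣ) : CircleDeg1Lift).map_add_int _ m
    have h3 : ((F^j : CircleDeg1Liftˣ) : CircleDeg1Lift)
          (((F^k : CircleDeg1Liftˣ) : CircleDeg1Lift) b)
        = ((F^(j+k) : CircleDeg1Liftˣ) : CircleDeg1Lift) b := by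
      rw [zpow_add, Units.val_mul, mul_apply]
    push_cast
    rw [h3] at h2
    linarith
  have step : ∀ w ∈ up F b c, Hb F b x - w ≤ Hb F c x := by
    intro w hw
    have h4 : Hb F b x - w ≤ sInf (up F c x) :=
      le_csInf (up_nonempty c x) (fun v hv => by have := key w hw v hv; linarith)
    exact h4
  have h5 : Hb F b x - Hb F c x ≤ sInf (up F b c) :=
    le_csInf (up_nonempty b c) (fun w hw => by have := step w hw; linarith)
  have h6 : sInf (up F b c) = Hb F b c := rfl
  linarith

lemma sSup_lo_ge_add (b c x : ℝ) : sSup (lo F b c) + sSup (lo F c x) ≤ sSup (lo F b x) := by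
  have key : ∀ w ∈ lo F b c, ∀ v ∈ lo F c x, v + w ≤ sSup (lo F b x) := by
    rintro w ⟨k, m, rfl, hk⟩ v ⟨j, i, rfl, hj⟩
    refine le_csSup (lo_bddAbove b x) ⟨j + k, m + i, by push_cast; ring, ?_⟩
    have h1 : ((F^j : CircleDeg1Liftˣ) : CircleDeg1Lift)
          (((F^k : CircleDeg1Liftˣ) : CircleDeg1Lift) b + m)
        ≤ ((F^j : CircleDeg1Liftˣ) : CircleDeg1Lift) c :=
      ((F^j : CircleDeg1Liftˣ) : CircleDeg1Lift).monotone hk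
    have h2 : ((F^j : CircleDeg1Liftˣ) : CircleDeg1Lift)
          (((F^k : CircleDeg1Liftˣ) : CircleDeg1Lift) b + m)
        = ((F^j : CircleDeg1Liftˣ) : CircleDeg1Lift)
          (((F^k : CircleDeg1Liftˣ) : CircleDeg1Lift) b) + m :=
      ((F^j : CircleDeg1Liftˣ) : CircleDeg1Lift).map_add_int _ m
    have h3 : ((F^j : CircleDeg1Liftˣ) : CircleDeg1Lift)
          (((F^k : CircleDeg1Liftˣ) : CircleDeg1Lift) b)
        = ((F^(j+k) : CircleDeg1Liftˣ) : CircleDeg1Lift) b := by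
      rw [zpow_add, Units.val_mul, mul_apply]
    push_cast
    rw [h3] at h2
    linarith
  have step : ∀ w ∈ lo F b c, sSup (lo F c x) + w ≤ sSup (lo F b x) := by
    intro w hw
    have h4 : sSup (lo F c x) ≤ sSup (lo F b x) - w :=
      csSup_le (lo_nonempty c x) (fun v hv => by have := key w hw v hv; linarith)
    linarith
  have h5 : sSup (lo F b c) ≤ sSup (lo F b x) - sSup (lo F c x) :=
    csSup_le (lo_nonempty b c) (fun w hw => by have := step w hw; linarith)
  linarith

lemma Hb_cocycle (hd : DenseVals F) (b c x : ℝ) : Hb F b x = Hb F b c + Hb F c x := by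
  refine le_antisymm (Hb_le_add b c x) ?_
  have h := sSup_lo_ge_add (F := F) b c x
  rw [sSup_lo_eq hd, sSup_lo_eq hd, sSup_lo_eq hd] at h
  exact h

/-! ### order iso lemmas for units -/

lemma unit_le_iff (W : CircleDeg1Liftˣ) (x y : ℝ) :
    (W : CircleDeg1Lift) x ≤ y ↔ x ≤ ((W⁻¹ : CircleDeg1Liftˣ) : CircleDeg1Lift) y := by
  constructor
  · intro h
    have := ((W⁻¹ : CircleDeg1Liftˣ) : CircleDeg1Lift).monotone h
    rwa [units_inv_apply_apply] at this
  · intro h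
    have := (W : CircleDeg1Lift).monotone h
    rwa [units_apply_inv_apply] at this

lemma unit_lt_iff (W : CircleDeg1Liftˣ) (x y : ℝ) :
    y < (W : CircleDeg1Lift) x ↔ ((W⁻¹ : CircleDeg1Liftˣ) : CircleDeg1Lift) y < x := by
  rw [← not_le, ← not_le, unit_le_iff]

lemma unit_preimage_Ioc (W : CircleDeg1Liftˣ) (a b : ℝ) :
    ⇑(W : CircleDeg1Lift) ⁻¹' (Ioc a b) =
      Ioc (((W⁻¹ : CircleDeg1Liftˣ) : CircleDeg1Lift) a)
        (((W⁻¹ : CircleDeg1Liftˣ) : CircleDeg1Lift) b) := by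
  ext z
  simp only [mem_preimage, mem_Ioc]
  rw [unit_lt_iff, unit_le_iff]

/-! ### equivariance -/

lemma Hb_units_comm (G : CircleDeg1Liftˣ) (hFG : Commute F G) (x : ℝ) :
    Hb F 0 ((G : CircleDeg1Lift) x)
      = Hb F (((G⁻¹ : CircleDeg1Liftˣ) : CircleDeg1Lift) 0) x := by
  have hset : up F 0 ((G : CircleDeg1Lift) x)
      = up F (((G⁻¹ : CircleDeg1Liftˣ) : CircleDeg1Lift) 0) x := by
    ext v
    simp only [up, mem_setOf_eq]
    refine exists_congr fun k => exists_congr fun m => and_congr_right fun _ => ?_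
    rw [unit_le_iff]
    have h1 : ((G⁻¹ : CircleDeg1Liftˣ) : CircleDeg1Lift)
        (((F^k : CircleDeg1Liftˣ) : CircleDeg1Lift) 0 + m)
        = ((G⁻¹ : CircleDeg1Liftˣ) : CircleDeg1Lift)
          (((F^k : CircleDeg1Liftˣ) : CircleDeg1Lift) 0) + m :=
      map_add_int _ _ m
    have h2 : ((G⁻¹ : CircleDeg1Liftˣ) : CircleDeg1Lift)
        (((F^k : CircleDeg1Liftˣ) : CircleDeg1Lift) 0)
        = ((F^k : CircleDeg1Liftˣ) : CircleDeg1Lift)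
          (((G⁻¹ : CircleDeg1Liftˣ) : CircleDeg1Lift) 0) := by
      have hc : Commute (G⁻¹ : CircleDeg1Liftˣ) (F^k : CircleDeg1Liftˣ) :=
        ((hFG.zpow_left k).symm).inv_left
      have hval := congrArg Units.val hc.eq
      have happ := congrFun (congrArg (fun (f : CircleDeg1Lift) => ⇑f) hval) (0:ℝ)
      simpa [Units.val_mul, mul_apply] using happ
    rw [h1, h2]
  unfold Hb
  rw [hset]

lemma Hb_G_shift (hd : DenseVals F) (G : CircleDeg1Liftˣ) (hFG : Commute F G) (x : ℝ) :
    Hb F 0 ((G : CircleDeg1Lift) x)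
      = Hb F 0 x + Hb F (((G⁻¹ : CircleDeg1Liftˣ) : CircleDeg1Lift) 0) 0 := by
  rw [Hb_units_comm G hFG x,
    Hb_cocycle hd (((G⁻¹ : CircleDeg1Liftˣ) : CircleDeg1Lift) 0) 0 x]
  ring

/-! ### right continuity -/

lemma sInf_image_Ioi (hd : DenseVals F) (x : ℝ) :
    sInf (Hb F 0 '' Ioi x) = Hb F 0 x := by
  have hne : (Hb F 0 '' Ioi x).Nonempty := ⟨_, mem_image_of_mem _ (by linarith : x < x + 1)⟩
  have hbdd : BddBelow (Hb F 0 '' Ioi x) := by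
    refine ⟨Hb F 0 x, ?_⟩
    rintro w ⟨y, hy, rfl⟩
    exact Hb_mono 0 (le_of_lt hy)
  refine le_antisymm ?_ (le_csInf hne ?_)
  · by_contra hlt
    push_neg at hlt
    obtain ⟨k, m, h1, h2⟩ := hd _ _ hlt
    rcases lt_or_ge x (((F^k : CircleDeg1Liftˣ) : CircleDeg1Lift) 0 + m) with h | h
    · have hy : Hb F 0 (((F^k : CircleDeg1Liftˣ) : CircleDeg1Lift) 0 + m)
          ≤ (k:ℝ) * translationNumber (F : CircleDeg1Lift) + m :=
        Hb_le ⟨k, m, rfl, le_refl _⟩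
      have := csInf_le hbdd (mem_image_of_mem _ h)
      linarith
    · have := le_Hb (v := (k:ℝ) * translationNumber (F : CircleDeg1Lift) + m)
        (b := (0:ℝ)) (x := x) ⟨k, m, rfl, h⟩
      linarith
  · rintro w ⟨y, hy, rfl⟩
    exact Hb_mono 0 (le_of_lt hy)

lemma H_rightCont (hd : DenseVals F) (x : ℝ) :
    ContinuousWithinAt (Hb F 0) (Ici x) x := by
  rw [← continuousWithinAt_Ioi_iff_Ici]
  have h := (Hb_mono (F := F) 0).tendsto_nhdsGT x
  rwa [sInf_image_Ioi hd x] at h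

variable (F) in
noncomputable def HS (hd : DenseVals F) : StieltjesFunction ℝ :=
  ⟨Hb F 0, Hb_mono 0, H_rightCont hd⟩

lemma HS_apply (hd : DenseVals F) (x : ℝ) : HS F hd x = Hb F 0 x := rfl

/-! ### invariance of the Stieltjes measure -/

lemma map_HS_measure (hd : DenseVals F) (W : CircleDeg1Liftˣ)
    (hWc : Continuous ⇑(W : CircleDeg1Lift)) (c : ℝ)
    (hshift : ∀ y, Hb F 0 ((W : CircleDeg1Lift) y) = Hb F 0 y + c) :
    Measure.map ⇑(W : CircleDeg1Lift) (HS F hd).measure = (HS F hd).measure := by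
  have hinvshift : ∀ y, Hb F 0 (((W⁻¹ : CircleDeg1Liftˣ) : CircleDeg1Lift) y) = Hb F 0 y - c := by
    intro y
    have := hshift (((W⁻¹ : CircleDeg1Liftˣ) : CircleDeg1Lift) y)
    rw [units_apply_inv_apply] at this
    linarith
  symm
  refine MeasureTheory.Measure.ext_of_Ioc _ _ (fun a b hab => ?_)
  rw [Measure.map_apply hWc.measurable measurableSet_Ioc, unit_preimage_Ioc,
    StieltjesFunction.measure_Ioc, StieltjesFunction.measure_Ioc]
  simp only [HS_apply, hinvshift]
  ring_nf

lemma translate_coe_eq (n : ℝ) :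
    ⇑((translate (Multiplicative.ofAdd n) : CircleDeg1Liftˣ) : CircleDeg1Lift)
      = fun y => n + y :=
  funext fun y => CircleDeg1Lift.translate_apply n y

lemma map_HS_translate (hd : DenseVals F) (n : ℤ) :
    Measure.map (fun y : ℝ => (n:ℝ) + y) (HS F hd).measure = (HS F hd).measure := by
  have h := map_HS_measure hd (translate (Multiplicative.ofAdd (n:ℝ)))
    (by rw [translate_coe_eq]; exact continuous_const.add continuous_id) n
    (fun y => by rw [translate_coe_eq]; simp only; rw [add_comm]; exact Hb_add_int 0 y n)
  rwa [translate_coe_eq] at h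

/-! ### fundamental domain independence -/

lemma nu_inter_Ioc (ν : Measure ℝ)
    (htrans : ∀ n : ℤ, Measure.map (fun y : ℝ => (n:ℝ) + y) ν = ν)
    (B : Set ℝ) (hBm : MeasurableSet B) (hB : ∀ (y : ℝ) (n : ℤ), y + n ∈ B ↔ y ∈ B)
    (a : ℝ) : ν (B ∩ Ioc a (a+1)) = ν (B ∩ Ioc 0 1) := by
  have step : ∀ (m : ℤ) (S : Set ℝ), MeasurableSet S →
      ν ((fun y : ℝ => (m:ℝ) + y) ⁻¹' S) = ν S := by
    intro m S hS
    conv_rhs => rw [← htrans m]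
    rw [Measure.map_apply (by fun_prop) hS]
  set n : ℤ := ⌈a⌉ with hn
  have h1 : a ≤ (n:ℝ) := Int.le_ceil a
  have h2 : (n:ℝ) ≤ a + 1 := (Int.ceil_lt_add_one a).le
  set t : ℝ := a + 1 - n with htdef
  have ht0 : 0 ≤ t := by simp only [htdef]; linarith
  have ht1 : t ≤ 1 := by simp only [htdef]; linarith
  have e1 : B ∩ Ioc a (a+1) = (B ∩ Ioc a n) ∪ (B ∩ Ioc n (a+1)) := by
    rw [← inter_union_distrib_left, Set.Ioc_union_Ioc_eq_Ioc h1 h2]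
  have hdisj : Disjoint (B ∩ Ioc a (n:ℝ)) (B ∩ Ioc (n:ℝ) (a+1)) :=
    Disjoint.mono inter_subset_right inter_subset_right (Set.Ioc_disjoint_Ioc_of_le le_rfl)
  have e2 : ν (B ∩ Ioc a (a+1)) = ν (B ∩ Ioc a n) + ν (B ∩ Ioc n (a+1)) := by
    rw [e1, measure_union hdisj (hBm.inter measurableSet_Ioc)]
  have e3 : ν (B ∩ Ioc (n:ℝ) (a+1)) = ν (B ∩ Ioc 0 t) := by
    rw [← step n _ (hBm.inter measurableSet_Ioc)]
    congr 1
    ext y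
    simp only [mem_preimage, mem_inter_iff, mem_Ioc]
    constructor
    · rintro ⟨hyB, hy1, hy2⟩
      rw [add_comm] at hyB
      rw [hB] at hyB
      exact ⟨hyB, by linarith, by simp only [htdef]; linarith⟩
    · rintro ⟨hyB, hy1, hy2⟩
      rw [htdef] at hy2
      refine ⟨?_, by linarith, by linarith⟩
      rw [add_comm, hB]
      exact hyB
  have e4 : ν (B ∩ Ioc a (n:ℝ)) = ν (B ∩ Ioc t 1) := by
    rw [← step (n-1) _ (hBm.inter measurableSet_Ioc)]
    congr 1
    ext y
    simp only [mem_preimage, mem_inter_iff, mem_Ioc]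
    push_cast
    constructor
    · rintro ⟨hyB, hy1, hy2⟩
      rw [add_comm, show ((n:ℝ) - 1) = ((n - 1 : ℤ) : ℝ) by push_cast; ring] at hyB
      rw [hB] at hyB
      exact ⟨hyB, by simp only [htdef]; linarith, by linarith⟩
    · rintro ⟨hyB, hy1, hy2⟩
      rw [htdef] at hy1
      refine ⟨?_, by linarith, by linarith⟩
      rw [add_comm, show ((n:ℝ) - 1) = ((n - 1 : ℤ) : ℝ) by push_cast; ring, hB]
      exact hyB
  have e5 : ν (B ∩ Ioc 0 1) = ν (B ∩ Ioc 0 t) + ν (B ∩ Ioc t 1) := by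
    rw [show B ∩ Ioc (0:ℝ) 1 = (B ∩ Ioc 0 t) ∪ (B ∩ Ioc t 1) by
        rw [← inter_union_distrib_left, Set.Ioc_union_Ioc_eq_Ioc ht0 ht1],
      measure_union (Disjoint.mono inter_subset_right inter_subset_right
        (Set.Ioc_disjoint_Ioc_of_le le_rfl)) (hBm.inter measurableSet_Ioc)]
  rw [e2, e3, e4, e5]
  ring

/-! ### rationality dichotomy -/

lemma dense_vals
    (hirr : ¬ ∃ (m : ℤ) (n : ℕ), 0 < n ∧ translationNumber (F : CircleDeg1Lift) = m / n) :
    DenseVals F := by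
  set τ := translationNumber (F : CircleDeg1Lift) with hτ
  set S : AddSubgroup ℝ := AddSubgroup.closure {τ, (1:ℝ)} with hS
  have hτS : τ ∈ S := AddSubgroup.subset_closure (by simp)
  have h1S : (1:ℝ) ∈ S := AddSubgroup.subset_closure (by simp)
  rcases S.dense_or_cyclic with hdense | ⟨c, hc⟩
  · intro a b hab
    obtain ⟨s, hsS, hs1, hs2⟩ := hdense.exists_between hab
    obtain ⟨k, m, hkm⟩ := (AddSubgroup.mem_closure_pair).1 hsS
    have hval : (k:ℝ) * τ + m = s := by
      rw [← hkm]; push_cast [zsmul_eq_mul]; ring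
    exact ⟨k, m, by rw [hval]; exact hs1, by rw [hval]; exact hs2⟩
  · exfalso
    rw [hc, AddSubgroup.mem_closure_singleton] at hτS h1S
    obtain ⟨m, hm⟩ := hτS
    obtain ⟨n, hn⟩ := h1S
    have hn0 : n ≠ 0 := by
      rintro rfl
      simp at hn
    simp only [zsmul_eq_mul] at hm hn
    have hnne : (n:ℝ) ≠ 0 := Int.cast_ne_zero.2 hn0
    have hc_eq : c = 1/(n:ℝ) := by
      field_simp
      linarith [hn]
    have hτval : τ = (m:ℝ) / (n:ℝ) := by
      rw [← hm, hc_eq]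
      field_simp
    rcases lt_or_gt_of_ne hn0 with hneg | hpos
    · refine hirr ⟨-m, (-n).toNat, by omega, ?_⟩
      rw [hτval]
      have hcast : (((-n).toNat : ℕ) : ℝ) = -(n:ℝ) := by
        have h := Int.toNat_of_nonneg (by omega : (0:ℤ) ≤ -n)
        exact_mod_cast congrArg (fun z : ℤ => (z : ℝ)) h
      rw [hcast]
      push_cast
      rw [neg_div_neg_eq]
    · refine hirr ⟨m, n.toNat, by omega, ?_⟩
      rw [hτval]
      congr 1
      have h := Int.toNat_of_nonneg (by omega : (0:ℤ) ≤ n)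
      exact_mod_cast (congrArg (fun z : ℤ => (z : ℝ)) h).symm

/-! ### commuting lifts -/

lemma homeo_mul_apply (f g : S1 ≃ₜ S1) (z : S1) : (f * g) z = f (g z) := rfl

lemma homeo_pow_apply (f : S1 ≃ₜ S1) (j : ℕ) (z : S1) : (f ^ (j+1)) z = (f ^ j) (f z) := by
  rw [pow_succ]
  exact homeo_mul_apply (f^j) f z

lemma lift_commute (f g : S1 ≃ₜ S1) (hfg : f * g = g * f)
    (Fu Gu : CircleDeg1Liftˣ)
    (hFc : Continuous ⇑(Fu : CircleDeg1Lift)) (hGc : Continuous ⇑(Gu : CircleDeg1Lift))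
    (hFp : ∀ x : ℝ, (((Fu : CircleDeg1Lift) x : ℝ) : S1) = f (x : S1))
    (hGp : ∀ x : ℝ, (((Gu : CircleDeg1Lift) x : ℝ) : S1) = g (x : S1)) :
    Commute Fu Gu := by
  set Fv := ((Fu : CircleDeg1Liftˣ) : CircleDeg1Lift) with hFv
  set Gv := ((Gu : CircleDeg1Liftˣ) : CircleDeg1Lift) with hGv
  set D : ℝ → ℝ := fun x => Fv (Gv x) - Gv (Fv x) with hD
  have hDint : ∀ x, ∃ n : ℤ, D x = n := by
    intro x
    have h1 : ((Fv (Gv x) : ℝ) : S1) = f (g (x : S1)) := by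
      rw [hFp (Gv x), hGp x]
    have h2 : ((Gv (Fv x) : ℝ) : S1) = g (f (x : S1)) := by
      rw [hGp (Fv x), hFp x]
    have h3 : f (g (x : S1)) = g (f (x : S1)) := by
      have := congrArg (fun h : S1 ≃ₜ S1 => h (x : S1)) hfg
      simpa [homeo_mul_apply] using this
    have h4 : ((Fv (Gv x) : ℝ) : S1) = ((Gv (Fv x) : ℝ) : S1) := by rw [h1, h2, h3]
    obtain ⟨n, hn⟩ := (QuotientAddGroup.eq).1 h4
    simp only [zsmul_eq_mul, mul_one] at hn
    exact ⟨-n, by simp only [hD]; push_cast; linarith⟩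
  have hDcont : Continuous D := ((hFc.comp hGc).sub (hGc.comp hFc))
  have hDconst : ∀ x, D x = D 0 := by
    intro x
    by_contra hne
    obtain ⟨nx, hnx⟩ := hDint x
    obtain ⟨n0, hn0⟩ := hDint 0
    have hneq : nx ≠ n0 := by
      rintro rfl
      exact hne (by rw [hnx, hn0])
    have key : ∀ r : ℝ, r ∈ Set.Icc (min (D 0) (D x)) (max (D 0) (D x)) → ∃ y, D y = r := by
      intro r hr
      rcases le_total (D 0) (D x) with h | h
      · have hsub : Set.Icc (D 0) (D x) ⊆ Set.range D := intermediate_value_univ 0 x hDcont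
        obtain ⟨y, hy⟩ := hsub (by rwa [min_eq_left h, max_eq_right h] at hr)
        exact ⟨y, hy⟩
      · have hsub : Set.Icc (D x) (D 0) ⊆ Set.range D := intermediate_value_univ x 0 hDcont
        obtain ⟨y, hy⟩ := hsub (by rwa [min_eq_right h, max_eq_left h] at hr)
        exact ⟨y, hy⟩
    set nmin : ℤ := min n0 nx with hnmin
    have hr : ((nmin : ℝ) + 1/2) ∈ Set.Icc (min (D 0) (D x)) (max (D 0) (D x)) := by
      rw [hnx, hn0]
      constructor
      · rcases le_total n0 nx with h | h
        · rw [min_eq_left (by exact_mod_cast h : (n0:ℝ) ≤ nx)]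
          simp only [hnmin]
          rw [min_eq_left h]
          linarith
        · rw [min_eq_right (by exact_mod_cast h : (nx:ℝ) ≤ n0)]
          simp only [hnmin]
          rw [min_eq_right h]
          linarith
      · rcases le_total n0 nx with h | h
        · rw [max_eq_right (by exact_mod_cast h : (n0:ℝ) ≤ nx)]
          simp only [hnmin]
          rw [min_eq_left h]
          have h6 : n0 + 1 ≤ nx := by omega
          have h7 : ((n0:ℝ)) + 1 ≤ nx := by exact_mod_cast h6
          linarith
        · rw [max_eq_left (by exact_mod_cast h : (nx:ℝ) ≤ n0)]
          simp only [hnmin]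
          rw [min_eq_right h]
          have h6 : nx + 1 ≤ n0 := by omega
          have h7 : ((nx:ℝ)) + 1 ≤ n0 := by exact_mod_cast h6
          linarith
    obtain ⟨y, hy⟩ := key _ hr
    obtain ⟨ny, hny⟩ := hDint y
    rw [hny] at hy
    have h8 : (2*ny : ℤ) = 2*nmin + 1 := by
      have h9 : (2*(ny:ℝ)) = 2*(nmin:ℝ) + 1 := by push_cast; linarith
      exact_mod_cast h9
    omega
  obtain ⟨n, hn⟩ := hDint 0
  have hptw : ∀ x, Fv (Gv x) = Gv (Fv x) + n := by
    intro x
    have h1 := hDconst x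
    rw [hn] at h1
    simp only [hD] at h1
    linarith
  have hn0 : (n:ℝ) = 0 := by
    have hmul : Fv * Gv =
        ((translate (Multiplicative.ofAdd (n:ℝ)) : CircleDeg1Liftˣ) : CircleDeg1Lift)
          * (Gv * Fv) := by
      apply CircleDeg1Lift.ext
      intro x
      rw [mul_apply, mul_apply, CircleDeg1Lift.translate_apply, mul_apply, hptw x]
      ring
    have hcomm2 : Commute
        ((translate (Multiplicative.ofAdd (n:ℝ)) : CircleDeg1Liftˣ) : CircleDeg1Lift)
        (Gv * Fv) := by
      rw [commute_iff_commute]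
      intro x
      simp only [CircleDeg1Lift.translate_apply]
      exact (map_int_add (Gv * Fv) n x).symm
    have hτ1 : translationNumber (Fv * Gv) =
        (n:ℝ) + translationNumber (Gv * Fv) := by
      rw [hmul, translationNumber_mul_of_commute hcomm2, translationNumber_translate]
    have hconj : (Gv * (Fv * Gv)) * ((Gu⁻¹ : CircleDeg1Liftˣ) : CircleDeg1Lift)
        = Gv * Fv := by
      rw [mul_assoc Gv (Fv * Gv), mul_assoc Fv Gv]
      have hone : Gv * ((Gu⁻¹ : CircleDeg1Liftˣ) : CircleDeg1Lift) = 1 := by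
        rw [hGv, ← Units.val_mul, mul_inv_cancel, Units.val_one]
      rw [hone, mul_one]
    have hτ2 : translationNumber (Fv * Gv) = translationNumber (Gv * Fv) := by
      have h := translationNumber_conj_eq Gu (Fv * Gv)
      rw [show ((Gu : CircleDeg1Liftˣ) : CircleDeg1Lift) * (Fv * Gv)
          * ((Gu⁻¹ : CircleDeg1Liftˣ) : CircleDeg1Lift) = Gv * Fv from hconj] at h
      exact h.symm
    rw [hτ2] at hτ1
    linarith
  have hn0' : n = 0 := by exact_mod_cast hn0
  subst hn0'
  have hfc : Function.Commute ⇑Fv ⇑Gv := by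
    intro x
    have h := hptw x
    push_cast at h
    rw [add_zero] at h
    exact h
  have hcv : Commute Fv Gv := commute_iff_commute.2 hfc
  refine Units.ext ?_
  rw [Units.val_mul, Units.val_mul]
  exact hcv

/-! ### projections of iterates -/

lemma proj_iterate (f : S1 ≃ₜ S1) (Fu : CircleDeg1Liftˣ)
    (hFp : ∀ x : ℝ, (((Fu : CircleDeg1Lift) x : ℝ) : S1) = f (x : S1)) :
    ∀ (j : ℕ) (x : ℝ), (((⇑(Fu : CircleDeg1Lift))^[j] x : ℝ) : S1) = (f ^ j) ((x:ℝ) : S1) := by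
  intro j
  induction j with
  | zero => intro x; simp only [Function.iterate_zero, id_eq, pow_zero]; rfl
  | succ j ih =>
    intro x
    rw [Function.iterate_succ_apply, ih ((Fu : CircleDeg1Lift) x), hFp x,
      homeo_pow_apply]

end CHF

open CircleDeg1Lift Set Function MeasureTheory CHF in
/-- If the action of `φ(G)` is minimal and has no invariant
probability measure, then any orientation preserving homeomorphism commuting with
the action has finite order. -/
theorem commuting_homeo_finite_order (G : Type) [Group G] (φ : RGp G)
    (hmin : MinimalAct φ) (hnm : ¬ IsType0 φ)
    (U : S1 ≃ₜ S1) (hU : IsOP U) (hcomm : ∀ g, U * φ.toFun g = φ.toFun g * U) :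
    ∃ k : ℕ, 0 < k ∧ U ^ k = 1 := by
  obtain ⟨Fu, hFc, hFp⟩ := exists_lift U hU
  by_cases hrat : ∃ (m : ℤ) (n : ℕ), 0 < n ∧ translationNumber (Fu : CircleDeg1Lift) = m / n
  · -- rational rotation number: U has a periodic point, hence finite order by minimality
    obtain ⟨m, n, hn, htau⟩ := hrat
    obtain ⟨x, hx⟩ := (translationNumber_eq_rat_iff (f := (Fu : CircleDeg1Lift)) hFc hn).1 htau
    refine ⟨n, hn, ?_⟩
    have hx' : (⇑(Fu : CircleDeg1Lift))^[n] x = x + m := by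
      rw [← coe_pow]; exact hx
    have hfix : (U ^ n) ((x:ℝ) : S1) = ((x:ℝ) : S1) := by
      rw [← proj_iterate U Fu hFp n x, hx', S1.coe_add_int]
    set y0 : S1 := ((x:ℝ) : S1) with hy0
    have horb : ∀ g, (U^n) (φ.toFun g y0) = φ.toFun g y0 := by
      intro g
      have hc : Commute U (φ.toFun g) := hcomm g
      have heq := (hc.pow_left n).eq
      calc (U^n) (φ.toFun g y0) = ((U^n) * φ.toFun g) y0 := rfl
        _ = (φ.toFun g * (U^n)) y0 := by rw [heq]
        _ = φ.toFun g ((U^n) y0) := rfl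
        _ = φ.toFun g y0 := by rw [hfix]
    have hSclosed : IsClosed {z : S1 | (U^n) z = z} :=
      isClosed_eq (U^n).continuous continuous_id
    have hsub : Set.range (fun g => φ.toFun g y0) ⊆ {z : S1 | (U^n) z = z} := by
      rintro _ ⟨g, rfl⟩; exact horb g
    have hall : ∀ z : S1, (U^n) z = z := by
      intro z
      have hz : z ∈ closure (Set.range fun g => φ.toFun g y0) := hmin y0 z
      exact (closure_minimal hsub hSclosed) hz
    exact Homeomorph.ext hall
  · -- irrational rotation number: construct an invariant probability measure, contradiction
    exfalso
    apply hnm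
    have hd : DenseVals Fu := dense_vals hrat
    choose Gl hGc hGp using fun g => exists_lift (φ.toFun g) (φ.op g)
    have hFG : ∀ g, Commute Fu (Gl g) := fun g =>
      lift_commute U (φ.toFun g) (hcomm g) Fu (Gl g) hFc (hGc g) hFp (hGp g)
    set ν : Measure ℝ := (HS Fu hd).measure with hν
    set π : ℝ → S1 := fun x => ((x : ℝ) : S1) with hπ
    have hπc : Continuous π := AddCircle.continuous_mk' 1
    set μS : Measure S1 := Measure.map π (ν.restrict (Ioc 0 1)) with hμS
    have hμS_apply : ∀ A : Set S1, MeasurableSet A → μS A = ν (π ⁻¹' A ∩ Ioc 0 1) := by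
      intro A hA
      rw [hμS, Measure.map_apply hπc.measurable hA,
        Measure.restrict_apply (hπc.measurable hA)]
    have hH1 : Hb Fu 0 1 = Hb Fu 0 0 + 1 := by
      have h := Hb_add_int (F := Fu) 0 0 (1:ℤ)
      simpa using h
    refine ⟨μS, ⟨?_⟩, ?_⟩
    · rw [hμS_apply univ MeasurableSet.univ]
      simp only [preimage_univ, univ_inter]
      rw [hν, StieltjesFunction.measure_Ioc]
      simp only [HS_apply, hH1]
      norm_num
    · intro g
      set Gv := ((Gl g : CircleDeg1Liftˣ) : CircleDeg1Lift) with hGvdef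
      have hGcont : Continuous ⇑Gv := hGc g
      have hGinv : Measure.map ⇑Gv ν = ν :=
        map_HS_measure hd (Gl g) (hGc g) _ (fun y => Hb_G_shift hd (Gl g) (hFG g) y)
      refine Measure.ext fun A hA => ?_
      have hφm : Measurable ⇑(φ.toFun g) := (φ.toFun g).continuous.measurable
      rw [Measure.map_apply hφm hA, hμS_apply _ (hφm hA), hμS_apply A hA]
      set B : Set ℝ := π ⁻¹' A with hB
      have hBm : MeasurableSet B := hπc.measurable hA
      have hBper : ∀ (y : ℝ) (k : ℤ), y + k ∈ B ↔ y ∈ B := by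
        intro y k
        simp only [hB, mem_preimage, hπ]
        rw [S1.coe_add_int]
      have hpre : π ⁻¹' (⇑(φ.toFun g) ⁻¹' A) = ⇑Gv ⁻¹' B := by
        ext z
        simp only [mem_preimage, hB, hπ]
        rw [← hGp g z]
      have hIoc : ⇑Gv ⁻¹' (Ioc (Gv 0) (Gv 0 + 1)) = Ioc 0 1 := by
        have hG1 : Gv 0 + 1 = Gv 1 := by rw [← Gv.map_add_one 0]; norm_num
        rw [hG1, unit_preimage_Ioc]
        rw [units_inv_apply_apply, units_inv_apply_apply]
      have hstep1 : ⇑Gv ⁻¹' B ∩ Ioc 0 1 = ⇑Gv ⁻¹' (B ∩ Ioc (Gv 0) (Gv 0 + 1)) := by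
        rw [preimage_inter, hIoc]
      have hstep2 : ν (⇑Gv ⁻¹' (B ∩ Ioc (Gv 0) (Gv 0 + 1)))
          = ν (B ∩ Ioc (Gv 0) (Gv 0 + 1)) := by
        conv_rhs => rw [← hGinv]
        rw [Measure.map_apply hGcont.measurable (hBm.inter measurableSet_Ioc)]
      rw [hpre, hstep1, hstep2,
        nu_inter_Ioc ν (map_HS_translate hd) B hBm hBper (Gv 0)]
end
end
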